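/- arXiv:1701.01979 — 3 statements merged into one kernel-verified Lean document; each statement's English description precedes it below -/
import Mathlib

section
/- Let n ≥ 1 be an integer, let f : ℂ → ℂ be continuous with compact support, and let z ∈ b𝒰ⁿ. Then ∫_{b𝒰ⁿ} f(2i·ρ(w,z)) dβ(w) = (πⁿ/(n−1)!) · ∫_{ℂ₊} f(λ) (Im λ)^{n−1} dm₂(λ), where ℂ₊ := {λ ∈ ℂ : Im λ > 0} and dm₂ is Lebesgue measure on ℂ. -/
open MeasureTheory Real

noncomputable section

/-- The Siegel upper half-space `𝒰ⁿ ⊆ ℂ^{n+1}`: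
points `z = (z′, z_{n+1})` with `Im z_{n+1} > |z′|²`. -/
def Siegel (n : ℕ) : Set (Fin (n + 1) → ℂ) :=
  {z | ∑ j : Fin n, ‖z j.castSucc‖ ^ 2 < (z (Fin.last n)).im}

/-- `ρ(z,w) = (i/2)(conj w_{n+1} - z_{n+1}) - ∑_{j=1}^n z_j conj w_j`. -/
def rhoK (n : ℕ) (z w : Fin (n + 1) → ℂ) : ℂ :=
  Complex.I / 2 * ((starRingEnd ℂ) (w (Fin.last n)) - z (Fin.last n)) -
    ∑ j : Fin n, z j.castSucc * (starRingEnd ℂ) (w j.castSucc)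

/-- `ρ(z,z) = Im z_{n+1} - |z′|²`, as a real number. -/
def rhoSelf (n : ℕ) (z : Fin (n + 1) → ℂ) : ℝ :=
  (z (Fin.last n)).im - ∑ j : Fin n, ‖z j.castSucc‖ ^ 2

/-- The parametrization `(z′, t) ↦ (z′, t + i|z′|²)` of the boundary `b𝒰ⁿ`. -/
def bMap (n : ℕ) : (Fin n → ℂ) × ℝ → (Fin (n + 1) → ℂ) := fun q =>
  Fin.snoc q.1 ((q.2 : ℂ) + Complex.I * ((∑ j : Fin n, ‖q.1 j‖ ^ 2 : ℝ) : ℂ))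

/-- The measure `β` on `b𝒰ⁿ`: the pushforward of Lebesgue measure on `ℂⁿ × ℝ`
under `(z′, t) ↦ (z′, t + i|z′|²)`. -/
def betaM (n : ℕ) : Measure (Fin (n + 1) → ℂ) :=
  Measure.map (bMap n) volume

/-- The point `𝐢 = (0, …, 0, i) ∈ ℂ^{n+1}`. -/
def iotaPt (n : ℕ) : Fin (n + 1) → ℂ := fun j => if j = Fin.last n then Complex.I else 0

/-- The Pochhammer symbol `(x)_k = x (x+1) ⋯ (x+k-1)`. -/
def pochR (x : ℝ) (k : ℕ) : ℝ := ∏ i ∈ Finset.range k, (x + i)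

section Aux
open Set


lemma ball_vol (n : ℕ) (hn : 1 ≤ n) (c : ℝ) (hc : 0 < c) :
    volume {x : Fin n → ℂ | ∑ j, ‖x j‖ ^ 2 < c} =
      ENNReal.ofReal (π ^ n * c ^ n / (Nat.factorial n)) := by
  have : Nonempty (Fin n) := Fin.pos_iff_nonempty.mp hn
  have h := Complex.volume_sum_rpow_lt (Fin n) (p := 2) one_le_two (Real.sqrt c)
  have hset : {x : Fin n → ℂ | (∑ i, ‖x i‖ ^ (2:ℝ)) ^ (1/(2:ℝ)) < Real.sqrt c}
      = {x : Fin n → ℂ | ∑ j, ‖x j‖ ^ 2 < c} := by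
    ext x
    have hnn : (0:ℝ) ≤ ∑ i, ‖x i‖ ^ (2:ℝ) :=
      Finset.sum_nonneg fun i _ => Real.rpow_nonneg (norm_nonneg _) _
    have hsum : ∑ i, ‖x i‖ ^ (2:ℝ) = ∑ j, ‖x j‖ ^ 2 := by
      refine Finset.sum_congr rfl fun i _ => ?_
      rw [Real.rpow_two]
    simp only [Set.mem_setOf_eq, ← hsum]
    rw [Real.sqrt_eq_rpow,
      Real.rpow_lt_rpow_iff hnn hc.le (by norm_num : (0:ℝ) < 1/2)]
  rw [hset] at h
  rw [h]
  have hGamma1 : Gamma (2/2 + 1) = 1 := by norm_num [Real.Gamma_two]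
  have hGamma2 : Gamma (2 * (Fintype.card (Fin n) : ℝ) / 2 + 1) = (Nat.factorial n : ℝ) := by
    rw [show 2 * (Fintype.card (Fin n) : ℝ) / 2 + 1 = (n : ℝ) + 1 by
      rw [Fintype.card_fin]; ring]
    exact Real.Gamma_nat_eq_factorial n
  rw [hGamma1, hGamma2, Fintype.card_fin, mul_one]
  rw [← ENNReal.ofReal_pow (Real.sqrt_nonneg c), ← ENNReal.ofReal_mul (by positivity)]
  congr 1
  rw [pow_mul, Real.sq_sqrt hc.le]
  ring

lemma phi_measurable (n : ℕ) : Measurable (fun ζ : Fin n → ℂ => ∑ j, ‖ζ j‖ ^ 2) := by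
  exact Finset.measurable_sum _ fun j _ =>
    ((continuous_norm.comp (continuous_apply j)).pow 2).measurable

lemma map_radial (n : ℕ) (hn : 1 ≤ n) :
    Measure.map (fun ζ : Fin n → ℂ => ∑ j, ‖ζ j‖ ^ 2) volume =
      volume.withDensity (fun r => Set.indicator (Set.Ioi (0:ℝ))
        (fun r => ENNReal.ofReal (π ^ n / (Nat.factorial (n-1)) * r ^ (n-1))) r) := by
  have hn0 : (n:ℝ) ≠ 0 := Nat.cast_ne_zero.mpr (by omega)
  -- value on Iio c
  have key : ∀ c : ℝ,
      Measure.map (fun ζ : Fin n → ℂ => ∑ j, ‖ζ j‖ ^ 2) volume (Set.Iio c) =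
      volume.withDensity (fun r => Set.indicator (Set.Ioi (0:ℝ))
        (fun r => ENNReal.ofReal (π ^ n / (Nat.factorial (n-1)) * r ^ (n-1))) r) (Set.Iio c) := by
    intro c
    rw [Measure.map_apply (phi_measurable n) measurableSet_Iio,
      withDensity_apply _ measurableSet_Iio]
    have hind : ∫⁻ r in Set.Iio c, Set.indicator (Set.Ioi (0:ℝ))
        (fun r => ENNReal.ofReal (π ^ n / (Nat.factorial (n-1)) * r ^ (n-1))) r
        = ∫⁻ r in Set.Ioo 0 c, ENNReal.ofReal (π ^ n / (Nat.factorial (n-1)) * r ^ (n-1)) := by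
      rw [lintegral_indicator measurableSet_Ioi _, Measure.restrict_restrict measurableSet_Ioi]
      congr 1
    rw [hind]
    rcases le_or_gt c 0 with hc | hc
    · rw [Set.Ioo_eq_empty (not_lt.mpr hc), Measure.restrict_empty, lintegral_zero_measure]
      have : (fun ζ : Fin n → ℂ => ∑ j, ‖ζ j‖ ^ 2) ⁻¹' Set.Iio c = ∅ := by
        ext x
        simp only [Set.mem_preimage, Set.mem_Iio, Set.mem_empty_iff_false, iff_false, not_lt]
        exact hc.trans (Finset.sum_nonneg fun j _ => by positivity)
      rw [this, measure_empty]
    · have hpre : (fun ζ : Fin n → ℂ => ∑ j, ‖ζ j‖ ^ 2) ⁻¹' Set.Iio c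
          = {x : Fin n → ℂ | ∑ j, ‖x j‖ ^ 2 < c} := rfl
      rw [hpre, ball_vol n hn c hc]
      -- compute the lintegral
      have hint : IntegrableOn (fun r : ℝ => π ^ n / (Nat.factorial (n-1)) * r ^ (n-1))
          (Set.Ioo 0 c) := by
        apply ((continuous_const.mul (continuous_pow (n-1))).integrableOn_Icc (a := 0)
          (b := c)).mono_set Set.Ioo_subset_Icc_self
      rw [← ofReal_integral_eq_lintegral_ofReal hint]
      · congr 1
        rw [integral_const_mul]
        have : ∫ r in Set.Ioo (0:ℝ) c, r ^ (n-1) = c ^ n / n := by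
          rw [← MeasureTheory.integral_Ioc_eq_integral_Ioo,
            ← intervalIntegral.integral_of_le hc.le, integral_pow]
          rw [Nat.sub_add_cancel hn, zero_pow (by omega : n ≠ 0), sub_zero,
            show ((n-1 : ℕ):ℝ) + 1 = (n:ℝ) by rw [← Nat.cast_add_one, Nat.sub_add_cancel hn]]
        rw [this]
        have hfac : (Nat.factorial n : ℝ) = n * (Nat.factorial (n-1)) := by
          rw [← Nat.cast_mul, Nat.mul_factorial_pred (by omega)]
        rw [hfac]
        have h1 : (Nat.factorial (n-1) : ℝ) ≠ 0 := Nat.cast_ne_zero.mpr (Nat.factorial_ne_zero _)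
        field_simp
      · filter_upwards [ae_restrict_mem measurableSet_Ioo] with r hr
        have : (0:ℝ) < r := hr.1
        positivity
  refine Measure.FiniteSpanningSetsIn.ext
    ((BorelSpace.measurable_eq (α := ℝ)).trans (borel_eq_generateFrom_Iio ℝ)) isPiSystem_Iio
    ?_ ?_
  · refine ⟨fun k => Set.Iio k, fun k => Set.mem_range_self _, fun k => ?_, ?_⟩
    · rw [Measure.map_apply (phi_measurable n) measurableSet_Iio]
      have hsub : ((fun ζ : Fin n → ℂ => ∑ j, ‖ζ j‖ ^ 2) ⁻¹' Set.Iio (k:ℝ))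
          ⊆ {x : Fin n → ℂ | ∑ j, ‖x j‖ ^ 2 < (k:ℝ) + 1} := by
        intro x hx
        have hx' : ∑ j, ‖x j‖ ^ 2 < (k:ℝ) := hx
        exact lt_trans hx' (by linarith)
      refine lt_of_le_of_lt (measure_mono hsub) ?_
      rw [ball_vol n hn ((k:ℝ)+1) (by positivity)]
      exact ENNReal.ofReal_lt_top
    · exact Set.iUnion_eq_univ_iff.mpr fun x => (exists_nat_gt x).imp fun k h => h
  · rintro s ⟨c, rfl⟩
    exact key c

lemma radial_integral (n : ℕ) (hn : 1 ≤ n) (H : ℝ → ℂ) (hH : Continuous H) :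
    ∫ ζ : Fin n → ℂ, H (∑ j, ‖ζ j‖ ^ 2) =
      ∫ r in Set.Ioi (0:ℝ), (π ^ n / (Nat.factorial (n-1)) * r ^ (n-1)) • H r := by
  rw [← integral_map (phi_measurable n).aemeasurable hH.aestronglyMeasurable, map_radial n hn]
  set K : ℝ := π ^ n / (Nat.factorial (n-1)) with hK
  set d : ℝ → NNReal := fun r => Set.indicator (Set.Ioi 0)
    (fun r => (K * r ^ (n-1)).toNNReal) r with hd
  have hdm : Measurable d := by
    refine Measurable.indicator ?_ measurableSet_Ioi
    exact (measurable_const.mul (measurable_id.pow_const _)).real_toNNReal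
  have hcoe : (fun r => Set.indicator (Set.Ioi (0:ℝ))
      (fun r => ENNReal.ofReal (K * r ^ (n-1))) r) = fun r => ((d r : NNReal) : ENNReal) := by
    funext r
    by_cases h : r ∈ Set.Ioi (0:ℝ) <;>
      simp [hd, Set.indicator_of_mem, Set.indicator_of_notMem, h, ENNReal.ofReal]
  rw [hcoe, integral_withDensity_eq_integral_smul hdm]
  rw [← integral_indicator measurableSet_Ioi]
  congr 1
  funext r
  by_cases h : r ∈ Set.Ioi (0:ℝ)
  · have h0 : (0:ℝ) ≤ K * r ^ (n-1) := by
      have : (0:ℝ) < r := h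
      positivity
    simp only [hd, Set.indicator_of_mem h]
    rw [NNReal.smul_def, Real.coe_toNNReal _ h0]
  · simp [hd, Set.indicator_of_notMem h]

lemma halfplane_integral (m : ℕ) (f : ℂ → ℂ) (hf : Continuous f)
    (hsupp : HasCompactSupport f) :
    ∫ lam in {lam : ℂ | 0 < lam.im}, f lam * ((lam.im ^ m : ℝ) : ℂ)
      = ∫ r in Set.Ioi (0:ℝ), (r ^ m) • ∫ t : ℝ, f ((t:ℂ) + Complex.I * (r:ℝ)) := by
  set g : ℂ → ℂ := fun lam => f lam * ((lam.im ^ m : ℝ) : ℂ) with hg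
  have hgc : Continuous g :=
    hf.mul (Complex.continuous_ofReal.comp (Complex.continuous_im.pow m))
  have hgs : HasCompactSupport g := hsupp.mul_right
  have e := Complex.measurableEquivRealProd
  have hemb : MeasurableEmbedding (Complex.measurableEquivRealProd.symm) :=
    Complex.measurableEquivRealProd.symm.measurableEmbedding
  have hmp : MeasurePreserving (Complex.measurableEquivRealProd.symm) volume volume :=
    Complex.volume_preserving_equiv_real_prod.symm
  have key := hmp.setIntegral_preimage_emb hemb g {lam : ℂ | 0 < lam.im}
  have hpre : (Complex.measurableEquivRealProd.symm) ⁻¹' {lam : ℂ | 0 < lam.im}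
      = (Set.univ : Set ℝ) ×ˢ Set.Ioi (0:ℝ) := by
    ext p
    simp [Complex.measurableEquivRealProd_symm_apply, Set.mem_prod]
  rw [hpre] at key
  rw [← key]
  -- now compute over the product set
  have hprod : (volume : Measure (ℝ × ℝ)).restrict ((Set.univ : Set ℝ) ×ˢ Set.Ioi (0:ℝ))
      = (volume : Measure ℝ).prod ((volume : Measure ℝ).restrict (Set.Ioi 0)) := by
    rw [Measure.volume_eq_prod, ← Measure.prod_restrict, Measure.restrict_univ]
  rw [hprod]
  have hint : Integrable (fun p : ℝ × ℝ => g (Complex.measurableEquivRealProd.symm p))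
      ((volume : Measure ℝ).prod ((volume : Measure ℝ).restrict (Set.Ioi 0))) := by
    rw [← hprod]
    refine ((hgc.comp ?_).integrable_of_hasCompactSupport ?_).restrict
    · exact Complex.equivRealProdCLM.symm.continuous
    · exact hgs.comp_homeomorph Complex.equivRealProdCLM.toHomeomorph.symm
  rw [integral_prod_symm _ hint]
  refine setIntegral_congr_fun measurableSet_Ioi fun r hr => ?_
  have : ∀ x : ℝ, g (Complex.measurableEquivRealProd.symm (x, r))
      = (r ^ m : ℝ) • f ((x:ℂ) + Complex.I * (r:ℝ)) := by
    intro x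
    rw [hg]
    simp only [Complex.measurableEquivRealProd_symm_apply]
    rw [Complex.mk_eq_add_mul_I, Complex.real_smul, Complex.ofReal_pow,
      mul_comm Complex.I]
    ring
  simp_rw [this]
  rw [integral_smul]

lemma rho_eval (n : ℕ) (z : Fin (n+1) → ℂ)
    (hz : (z (Fin.last n)).im = ∑ j : Fin n, ‖z j.castSucc‖ ^ 2)
    (ζ : Fin n → ℂ) (t : ℝ) :
    2 * Complex.I * rhoK n (bMap n (ζ, t)) z =
      ((t + (2 * (∑ j : Fin n, ζ j * (starRingEnd ℂ) (z j.castSucc)).im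
          - (z (Fin.last n)).re) : ℝ) : ℂ)
        + Complex.I * ((∑ j : Fin n, ‖ζ j - z j.castSucc‖ ^ 2 : ℝ) : ℂ) := by
  have hb : (∑ j : Fin n, ‖ζ j - z j.castSucc‖ ^ 2 : ℝ)
      = (∑ j : Fin n, ‖ζ j‖ ^ 2) + (∑ j : Fin n, ‖z j.castSucc‖ ^ 2)
        - 2 * (∑ j : Fin n, ζ j * (starRingEnd ℂ) (z j.castSucc)).re := by
    rw [Complex.re_sum, Finset.mul_sum, ← Finset.sum_add_distrib, ← Finset.sum_sub_distrib]
    refine Finset.sum_congr rfl fun j _ => ?_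
    rw [Complex.sq_norm, Complex.sq_norm, Complex.sq_norm, Complex.normSq_sub]
  simp only [rhoK, bMap, Fin.snoc_last, Fin.snoc_castSucc]
  set S : ℂ := ∑ j : Fin n, ζ j * (starRingEnd ℂ) (z j.castSucc) with hS
  set b0 : ℝ := ∑ j : Fin n, ‖ζ j‖ ^ 2 with hb0
  set L : ℂ := z (Fin.last n) with hL
  have hexp : 2 * Complex.I * (Complex.I / 2 * ((starRingEnd ℂ) L - ((t:ℂ) + Complex.I * (b0:ℝ))) - S)
      = ((t:ℂ) + Complex.I * (b0:ℝ)) - (starRingEnd ℂ) L - 2 * Complex.I * S := by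
    linear_combination ((starRingEnd ℂ) L - ((t:ℂ) + Complex.I * (b0:ℝ))) * Complex.I_sq
  rw [hexp]
  apply Complex.ext
  · simp only [Complex.add_re, Complex.sub_re, Complex.mul_re, Complex.I_re, Complex.I_im,
      Complex.ofReal_re, Complex.ofReal_im, Complex.conj_re, Complex.conj_im,
      Complex.mul_im, Complex.ofReal_add, Complex.ofReal_sub, Complex.ofReal_mul,
      Complex.re_ofNat, Complex.im_ofNat, Complex.ofReal_ofNat]
    ring
  · simp only [Complex.add_im, Complex.sub_im, Complex.mul_im, Complex.I_re, Complex.I_im,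
      Complex.ofReal_re, Complex.ofReal_im, Complex.conj_re, Complex.conj_im,
      Complex.mul_re, Complex.ofReal_add, Complex.ofReal_sub, Complex.ofReal_mul,
      Complex.re_ofNat, Complex.im_ofNat, Complex.ofReal_ofNat]
    rw [hb, ← hz]
    ring

lemma bMap_continuous (n : ℕ) : Continuous (bMap n) := by
  unfold bMap
  refine continuous_pi fun j => ?_
  induction j using Fin.lastCases with
  | last =>
    simp only [Fin.snoc_last]
    exact (Complex.continuous_ofReal.comp continuous_snd).add
      (continuous_const.mul (Complex.continuous_ofReal.comp
        (continuous_finset_sum _ fun j _ =>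
          ((continuous_norm.comp ((continuous_apply j).comp continuous_fst)).pow 2))))
  | cast i =>
    simp only [Fin.snoc_castSucc]
    exact (continuous_apply i).comp continuous_fst

section aux
variable (n : ℕ) (w : Fin n → ℂ) (s : ℝ)

def aF : (Fin n → ℂ) → ℝ := fun ζ => 2 * (∑ j, ζ j * (starRingEnd ℂ) (w j)).im - s

def bF : (Fin n → ℂ) → ℝ := fun ζ => ∑ j, ‖ζ j - w j‖ ^ 2

def AF : (Fin n → ℂ) × ℝ → ℂ := fun q =>
  ((q.2 + aF n w s q.1 : ℝ) : ℂ) + Complex.I * ((bF n w q.1 : ℝ) : ℂ)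

lemma aF_continuous : Continuous (aF n w s) := by
  unfold aF
  exact (continuous_const.mul (Complex.continuous_im.comp
    (continuous_finset_sum _ fun j _ => (continuous_apply j).mul continuous_const))).sub
    continuous_const

lemma bF_continuous : Continuous (bF n w) := by
  unfold bF
  exact continuous_finset_sum _ fun j _ =>
    (continuous_norm.comp ((continuous_apply j).sub continuous_const)).pow 2

lemma AF_continuous : Continuous (AF n w s) := by
  unfold AF
  exact (Complex.continuous_ofReal.comp
      (continuous_snd.add ((aF_continuous n w s).comp continuous_fst))).add
    (continuous_const.mul (Complex.continuous_ofReal.comp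
      ((bF_continuous n w).comp continuous_fst)))

lemma AF_re (q : (Fin n → ℂ) × ℝ) : (AF n w s q).re = q.2 + aF n w s q.1 := by
  simp [AF]

lemma AF_im (q : (Fin n → ℂ) × ℝ) : (AF n w s q).im = bF n w q.1 := by
  simp [AF]

lemma AF_compact_support (f : ℂ → ℂ) (hsupp : HasCompactSupport f) :
    HasCompactSupport (fun q => f (AF n w s q)) := by
  obtain ⟨R₀, hR₀⟩ := hsupp.isBounded.subset_closedBall 0
  set R : ℝ := max R₀ 0 with hR
  have hRsub : tsupport f ⊆ Metric.closedBall 0 R :=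
    hR₀.trans (Metric.closedBall_subset_closedBall (le_max_left _ _))
  have hR0 : (0:ℝ) ≤ R := le_max_right _ _
  set Z : ℝ := ∑ j, ‖w j‖ with hZ
  have hZ0 : 0 ≤ Z := Finset.sum_nonneg fun j _ => norm_nonneg _
  set C₁ : ℝ := Z + Real.sqrt R with hC₁
  set C₂ : ℝ := R + (2 * (C₁ * Z) + |s|) with hC₂
  set K : Set ((Fin n → ℂ) × ℝ) := (AF n w s) ⁻¹' (tsupport f) with hKdef
  have hKsub : K ⊆ (Metric.closedBall 0 C₁) ×ˢ (Metric.closedBall 0 C₂) := by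
    rintro ⟨ζ, t⟩ hq
    have hmem : AF n w s (ζ, t) ∈ Metric.closedBall 0 R := hRsub hq
    have hnorm : ‖AF n w s (ζ, t)‖ ≤ R := by
      rwa [Metric.mem_closedBall, Complex.dist_eq, sub_zero] at hmem
    have him : bF n w ζ ≤ R := by
      have := (Complex.abs_im_le_norm (AF n w s (ζ, t))).trans hnorm
      rwa [AF_im, abs_of_nonneg (Finset.sum_nonneg fun j _ => sq_nonneg _)] at this
    have hre : |t + aF n w s ζ| ≤ R := by
      have := (Complex.abs_re_le_norm (AF n w s (ζ, t))).trans hnorm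
      rwa [AF_re] at this
    -- bound on each coordinate of ζ
    have hζj : ∀ j, ‖ζ j‖ ≤ C₁ := by
      intro j
      have h1 : ‖ζ j - w j‖ ^ 2 ≤ R := by
        refine le_trans ?_ him
        exact Finset.single_le_sum (f := fun j => ‖ζ j - w j‖ ^ 2)
          (fun j _ => sq_nonneg _) (Finset.mem_univ j)
      have h2 : ‖ζ j - w j‖ ≤ Real.sqrt R := by
        have := Real.sqrt_le_sqrt h1
        rwa [Real.sqrt_sq (norm_nonneg _)] at this
      have h3 : ‖w j‖ ≤ Z :=
        Finset.single_le_sum (f := fun j => ‖w j‖)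
          (fun j _ => norm_nonneg _) (Finset.mem_univ j)
      calc ‖ζ j‖ = ‖ζ j - w j + w j‖ := by ring_nf
        _ ≤ ‖ζ j - w j‖ + ‖w j‖ := norm_add_le _ _
        _ ≤ Real.sqrt R + Z := add_le_add h2 h3
        _ = C₁ := by rw [hC₁]; ring
    have haζ : |aF n w s ζ| ≤ 2 * (C₁ * Z) + |s| := by
      have hS : ‖∑ j, ζ j * (starRingEnd ℂ) (w j)‖ ≤ C₁ * Z := by
        refine le_trans (norm_sum_le _ _) ?_
        rw [hZ, Finset.mul_sum]
        refine Finset.sum_le_sum fun j _ => ?_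
        rw [norm_mul, Complex.norm_conj]
        exact mul_le_mul (hζj j) le_rfl (norm_nonneg _)
          ((norm_nonneg _).trans (hζj j))
      have hSim : |(∑ j, ζ j * (starRingEnd ℂ) (w j)).im| ≤ C₁ * Z :=
        (Complex.abs_im_le_norm _).trans hS
      calc |aF n w s ζ| ≤ 2 * |(∑ j, ζ j * (starRingEnd ℂ) (w j)).im| + |s| := by
            rw [aF]
            refine (abs_sub _ _).trans ?_
            rw [abs_mul, abs_two]
        _ ≤ 2 * (C₁ * Z) + |s| := by linarith
    constructor
    · rw [Metric.mem_closedBall, dist_zero_right]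
      exact pi_norm_le_iff_of_nonneg ((Real.sqrt_nonneg R).trans
        (by rw [hC₁]; linarith) : (0:ℝ) ≤ C₁) |>.mpr fun j => hζj j
    · rw [Metric.mem_closedBall, Real.dist_eq, sub_zero]
      calc |t| = |t + aF n w s ζ - aF n w s ζ| := by ring_nf
        _ ≤ |t + aF n w s ζ| + |aF n w s ζ| := abs_sub _ _
        _ ≤ R + (2 * (C₁ * Z) + |s|) := add_le_add hre haζ
  have hKclosed : IsClosed K := (isClosed_tsupport f).preimage (AF_continuous n w s)
  have hKcompact : IsCompact K :=
    Metric.isCompact_of_isClosed_isBounded hKclosed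
      ((Metric.isBounded_closedBall.prod Metric.isBounded_closedBall).subset hKsub)
  exact HasCompactSupport.intro hKcompact fun q hq =>
    image_eq_zero_of_notMem_tsupport (fun h => hq h)

end aux

lemma H_continuous (f : ℂ → ℂ) (hf : Continuous f) (hsupp : HasCompactSupport f) :
    Continuous (fun r : ℝ => ∫ t : ℝ, f ((t:ℂ) + Complex.I * (r:ℝ))) := by
  obtain ⟨R₀, hR₀⟩ := hsupp.isBounded.subset_closedBall 0
  set R : ℝ := max R₀ 0 with hRdef
  have hRsub : tsupport f ⊆ Metric.closedBall 0 R :=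
    hR₀.trans (Metric.closedBall_subset_closedBall (le_max_left _ _))
  obtain ⟨M, hM⟩ := hf.bounded_above_of_compact_support hsupp
  refine continuous_of_dominated (bound := Set.indicator (Set.Icc (-R) R) (fun _ => M))
    (fun r => (hf.comp ((Complex.continuous_ofReal).add continuous_const)).aestronglyMeasurable)
    (fun r => ae_of_all _ fun t => ?_) ?_ (ae_of_all _ fun t => hf.comp
      (continuous_const.add (continuous_const.mul Complex.continuous_ofReal)))
  · by_cases ht : t ∈ Set.Icc (-R) R
    · rw [Set.indicator_of_mem ht]; exact hM _
    · rw [Set.indicator_of_notMem ht]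
      have htR : R < |t| := by
        rcases not_and_or.mp ((Set.mem_Icc).not.mp ht) with h | h
        · rw [abs_of_neg (by push_neg at h; linarith [le_max_right R₀ (0:ℝ)])]
          push_neg at h; linarith
        · push_neg at h
          exact lt_of_lt_of_le h (le_abs_self t)
      have : f ((t:ℂ) + Complex.I * (r:ℝ)) = 0 := by
        apply image_eq_zero_of_notMem_tsupport
        intro hmem
        have := hRsub hmem
        rw [Metric.mem_closedBall, Complex.dist_eq, sub_zero] at this
        have hre : |((t:ℂ) + Complex.I * (r:ℝ)).re| ≤ ‖_‖ :=
          Complex.abs_re_le_norm _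
        simp only [Complex.add_re, Complex.ofReal_re, Complex.mul_re, Complex.I_re,
          Complex.I_im, Complex.ofReal_im, Complex.ofReal_re] at hre
        norm_num at hre
        linarith
      rw [this, norm_zero]
  · rw [integrable_indicator_iff measurableSet_Icc]
    exact integrableOn_const measure_Icc_lt_top.ne


end Aux

/-- Corollary 3.3: for `n ≥ 1`, continuous compactly supported `f : ℂ → ℂ` and `z ∈ b𝒰ⁿ`,
`∫_{b𝒰ⁿ} f(2i ρ(w,z)) dβ(w) = (πⁿ/(n-1)!) ∫_{ℂ₊} f(λ) (Im λ)^{n-1} dm₂(λ)`. -/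
theorem forelli_corollary_one_variable (n : ℕ) (hn : 1 ≤ n)
    (f : ℂ → ℂ) (hf : Continuous f) (hsupp : HasCompactSupport f)
    (z : Fin (n + 1) → ℂ)
    (hz : (z (Fin.last n)).im = ∑ j : Fin n, ‖z j.castSucc‖ ^ 2) :
    (∫ w, f (2 * Complex.I * rhoK n w z) ∂betaM n) =
      ((π ^ n / (Nat.factorial (n - 1) : ℝ) : ℝ) : ℂ) *
        ∫ lam in {lam : ℂ | 0 < lam.im}, f lam * ((lam.im ^ (n - 1) : ℝ) : ℂ) := by
  classical
  set w' : Fin n → ℂ := fun j => z j.castSucc with hw'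
  set s : ℝ := (z (Fin.last n)).re with hs
  have hgc : Continuous fun w => f (2 * Complex.I * rhoK n w z) := by
    refine hf.comp (continuous_const.mul ?_)
    unfold rhoK
    exact (continuous_const.mul (continuous_const.sub (continuous_apply _))).sub
      (continuous_finset_sum _ fun j _ => (continuous_apply _).mul continuous_const)
  rw [betaM, integral_map (bMap_continuous n).measurable.aemeasurable
    hgc.aestronglyMeasurable]
  have hptw : ∀ q : (Fin n → ℂ) × ℝ,
      f (2 * Complex.I * rhoK n (bMap n q) z) = f (AF n w' s q) := by
    rintro ⟨ζ, t⟩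
    rw [rho_eval n z hz ζ t]
    rfl
  simp_rw [hptw]
  have hFc : Continuous fun q => f (AF n w' s q) := hf.comp (AF_continuous n w' s)
  have hFsupp : HasCompactSupport fun q => f (AF n w' s q) :=
    AF_compact_support n w' s f hsupp
  have hFint : Integrable (fun q => f (AF n w' s q)) (volume.prod volume) := by
    rw [← Measure.volume_eq_prod]
    exact hFc.integrable_of_hasCompactSupport hFsupp
  rw [Measure.volume_eq_prod, integral_prod _ hFint]
  set H : ℝ → ℂ := fun r => ∫ t : ℝ, f ((t:ℂ) + Complex.I * (r:ℝ)) with hH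
  have hinner : ∀ ζ : Fin n → ℂ, (∫ t : ℝ, f (AF n w' s (ζ, t))) = H (bF n w' ζ) := by
    intro ζ
    have hrw : ∀ t : ℝ, f (AF n w' s (ζ, t))
        = (fun u : ℝ => f ((u:ℂ) + Complex.I * ((bF n w' ζ : ℝ) : ℂ))) (t + aF n w' s ζ) := by
      intro t
      simp only [AF]
    simp_rw [hrw]
    exact integral_add_right_eq_self
      (fun u : ℝ => f ((u:ℂ) + Complex.I * ((bF n w' ζ : ℝ) : ℂ))) (aF n w' s ζ)
  simp_rw [hinner]
  have htrans : (∫ ζ : Fin n → ℂ, H (bF n w' ζ))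
      = ∫ ζ : Fin n → ℂ, H (∑ j, ‖ζ j‖ ^ 2) := by
    have hrw : ∀ ζ : Fin n → ℂ, H (bF n w' ζ)
        = (fun ξ : Fin n → ℂ => H (∑ j, ‖ξ j‖ ^ 2)) (ζ - w') := fun ζ => rfl
    simp_rw [hrw]
    exact integral_sub_right_eq_self
      (fun ξ : Fin n → ℂ => H (∑ j, ‖ξ j‖ ^ 2)) w'
  rw [htrans, radial_integral n hn H (H_continuous f hf hsupp),
    halfplane_integral (n-1) f hf hsupp]
  rw [show ((π ^ n / (Nat.factorial (n - 1) : ℝ) : ℝ) : ℂ)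
      * (∫ r in Set.Ioi (0:ℝ), (r ^ (n-1)) • H r)
    = (π ^ n / (Nat.factorial (n - 1) : ℝ) : ℝ)
      • (∫ r in Set.Ioi (0:ℝ), (r ^ (n-1)) • H r) from (Complex.real_smul).symm]
  rw [← integral_smul]
  congr 1
  funext r
  rw [smul_smul]
end
end

section
/- Let n ≥ 1 be an integer and let f ∈ L¹(b𝒰ⁿ, β). Then ∫_{b𝒰ⁿ} f dβ = π · ∫_{𝒰^{n−1}} ( (1/(2π)) ∫_0^{2π} f( √(ρ_{n−1}(w)) e^{iθ}, w ) dθ ) dV(w), where for w = (w₁,…,wₙ) ∈ ℂⁿ one sets ρ_{n−1}(w) := Im wₙ − ∑_{j=1}^{n−1} |w_j|², and (ζ, w) denotes the point of ℂ^{n+1} with first coordinate ζ ∈ ℂ and remaining coordinates w. -/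
open MeasureTheory Real Set
open scoped ENNReal

noncomputable section

/-- The map `(y, θ) ↦ (√y cos θ, √y sin θ)`. -/
def sqPolar : ℝ × ℝ → ℝ × ℝ := fun p => (Real.sqrt p.1 * Real.cos p.2, Real.sqrt p.1 * Real.sin p.2)

def sqPolarDeriv (p : ℝ × ℝ) : ℝ × ℝ →L[ℝ] ℝ × ℝ :=
  LinearMap.toContinuousLinearMap (Matrix.toLin (Module.Basis.finTwoProd ℝ) (Module.Basis.finTwoProd ℝ)
    !![Real.cos p.2 / (2 * Real.sqrt p.1), -(Real.sqrt p.1 * Real.sin p.2);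
       Real.sin p.2 / (2 * Real.sqrt p.1), Real.sqrt p.1 * Real.cos p.2])

theorem hasFDerivAt_sqPolar {p : ℝ × ℝ} (hp : p.1 ≠ 0) :
    HasFDerivAt sqPolar (sqPolarDeriv p) p := by
  unfold sqPolar sqPolarDeriv
  rw [Matrix.toLin_finTwoProd_toContinuousLinearMap]
  convert HasFDerivAt.prodMk (𝕜 := ℝ)
    (((Real.hasDerivAt_sqrt hp).comp_hasFDerivAt p hasFDerivAt_fst).mul
      ((Real.hasDerivAt_cos p.2).comp_hasFDerivAt p hasFDerivAt_snd))
    (((Real.hasDerivAt_sqrt hp).comp_hasFDerivAt p hasFDerivAt_fst).mul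
      ((Real.hasDerivAt_sin p.2).comp_hasFDerivAt p hasFDerivAt_snd)) using 2 <;>
  (try rfl) <;> simp [smul_smul, add_comm, neg_mul, smul_neg, neg_smul _ (ContinuousLinearMap.snd ℝ ℝ ℝ),
      div_eq_mul_inv, mul_comm]

theorem sqPolarDeriv_det {p : ℝ × ℝ} (hp : 0 < p.1) : (sqPolarDeriv p).det = 1 / 2 := by
  have h : Real.sqrt p.1 ≠ 0 := (Real.sqrt_pos.2 hp).ne'
  simp only [sqPolarDeriv, neg_mul, LinearMap.det_toContinuousLinearMap, LinearMap.det_toLin,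
    Matrix.det_fin_two_of, sub_neg_eq_add]
  field_simp
  nlinarith [Real.sin_sq_add_cos_sq p.2, Real.sq_sqrt hp.le, Real.sqrt_pos.2 hp]

theorem sqPolar_eq_polarCoord_symm (p : ℝ × ℝ) :
    sqPolar p = polarCoord.symm (Real.sqrt p.1, p.2) := rfl

theorem map_sqPolar :
    Measure.map sqPolar (volume.restrict (Ioi (0:ℝ) ×ˢ Ioo (-π) π)) =
      (2 : ℝ≥0∞) • (volume : Measure (ℝ × ℝ)) := by
  set s : Set (ℝ × ℝ) := Ioi (0:ℝ) ×ˢ Ioo (-π) π with hs_def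
  have hs : MeasurableSet s := measurableSet_Ioi.prod measurableSet_Ioo
  have hmeas : Measurable sqPolar := by
    unfold sqPolar
    fun_prop
  have hderiv : ∀ p ∈ s, HasFDerivWithinAt sqPolar (sqPolarDeriv p) s p := fun p hp =>
    (hasFDerivAt_sqPolar (ne_of_gt hp.1)).hasFDerivWithinAt
  have hinjq : InjOn (fun p : ℝ × ℝ => (Real.sqrt p.1, p.2)) s := by
    rintro ⟨y, θ⟩ hy ⟨y', θ'⟩ hy' h
    simp only [Prod.mk.injEq] at h
    have : y = y' := by
      have := congrArg (fun x : ℝ => x ^ 2) h.1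
      simpa [Real.sq_sqrt (le_of_lt hy.1), Real.sq_sqrt (le_of_lt hy'.1)] using this
    simp [this, h.2]
  have hq_image : (fun p : ℝ × ℝ => (Real.sqrt p.1, p.2)) '' s = polarCoord.target := by
    rw [polarCoord_target]
    ext ⟨r, θ⟩
    constructor
    · rintro ⟨⟨y, φ⟩, hy, h⟩
      simp only [Prod.mk.injEq] at h
      exact ⟨h.1 ▸ Real.sqrt_pos.2 hy.1, h.2 ▸ hy.2⟩
    · rintro ⟨hr, hθ⟩
      exact ⟨(r ^ 2, θ), ⟨mem_Ioi.mpr (pow_pos (mem_Ioi.mp hr) 2), hθ⟩, by simp [Real.sqrt_sq hr.le]⟩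
  have hinj : InjOn sqPolar s := by
    have h1 : InjOn polarCoord.symm polarCoord.target := by
      have := polarCoord.symm.injOn
      rwa [OpenPartialHomeomorph.symm_source] at this
    intro a ha b hb hab
    exact hinjq ha hb (h1 (hq_image ▸ mem_image_of_mem _ ha)
      (hq_image ▸ mem_image_of_mem _ hb) hab)
  have himage : sqPolar '' s = polarCoord.source := by
    have : sqPolar '' s = polarCoord.symm '' ((fun p : ℝ × ℝ => (Real.sqrt p.1, p.2)) '' s) := by
      rw [← image_comp]; rfl
    rw [this, hq_image, ← polarCoord.symm_image_target_eq_source]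
  have key := map_withDensity_abs_det_fderiv_eq_addHaar volume hs.nullMeasurableSet hderiv hinj
  have hdens : (volume.restrict s).withDensity
      (fun p => ENNReal.ofReal |(sqPolarDeriv p).det|) = ENNReal.ofReal (1/2) • volume.restrict s := by
    rw [← withDensity_const]
    refine withDensity_congr_ae ?_
    filter_upwards [ae_restrict_mem hs] with p hp
    rw [sqPolarDeriv_det hp.1]
    norm_num
  rw [hdens, Measure.map_smul, himage] at key
  have hsrc : volume.restrict polarCoord.source = volume := by
    rw [Measure.restrict_congr_set polarCoord_source_ae_eq_univ, Measure.restrict_univ]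
  rw [hsrc] at key
  have h2 : ENNReal.ofReal (1/2) = (2 : ℝ≥0∞)⁻¹ := by
    rw [show (1/2:ℝ) = 2⁻¹ by norm_num, ENNReal.ofReal_inv_of_pos two_pos]
    norm_num
  rw [h2] at key
  calc Measure.map sqPolar (volume.restrict s)
      = (2 : ℝ≥0∞) • ((2 : ℝ≥0∞)⁻¹ • Measure.map sqPolar (volume.restrict s)) := by
        rw [smul_smul, ENNReal.mul_inv_cancel (by norm_num) (by norm_num), one_smul]
    _ = (2 : ℝ≥0∞) • (volume : Measure (ℝ × ℝ)) := by rw [key]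

/-- The complex version: `(y, θ) ↦ √y e^{iθ}`. -/
def sqPolarC : ℝ × ℝ → ℂ := fun p =>
  ((Real.sqrt p.1 : ℝ) : ℂ) * Complex.exp ((p.2 : ℂ) * Complex.I)

theorem sqPolarC_eq (p : ℝ × ℝ) :
    sqPolarC p = Complex.measurableEquivRealProd.symm (sqPolar p) := by
  rw [sqPolarC, Complex.exp_mul_I]
  simp [Complex.measurableEquivRealProd, Complex.ext_iff, sqPolar,
    Complex.cos_ofReal_re, Complex.sin_ofReal_re]

theorem measurable_sqPolarC : Measurable sqPolarC := by
  unfold sqPolarC; fun_prop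

theorem map_sqPolarC :
    Measure.map sqPolarC ((volume.restrict (Ioi (0:ℝ))).prod (volume.restrict (Ioo (-π) π))) =
      (2 : ℝ≥0∞) • (volume : Measure ℂ) := by
  have h1 : (volume.restrict (Ioi (0:ℝ))).prod (volume.restrict (Ioo (-π) π)) =
      volume.restrict (Ioi (0:ℝ) ×ˢ Ioo (-π) π) := by
    rw [Measure.prod_restrict, ← Measure.volume_eq_prod]
  have hfun : sqPolarC = Complex.measurableEquivRealProd.symm ∘ sqPolar :=
    funext fun p => sqPolarC_eq p
  have hmeas : Measurable sqPolar := by unfold sqPolar; fun_prop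
  rw [h1, hfun, ← Measure.map_map Complex.measurableEquivRealProd.symm.measurable hmeas,
    map_sqPolar, Measure.map_smul,
    (Complex.volume_preserving_equiv_real_prod.symm Complex.measurableEquivRealProd).map_eq]

theorem prod_smul_right {α β : Type*} [MeasurableSpace α] [MeasurableSpace β]
    (μ : Measure α) (ν : Measure β) [SFinite ν] (c : ℝ≥0∞) (hc : c ≠ ⊤) :
    μ.prod (c • ν) = c • (μ.prod ν) := by
  ext s hs
  rw [Measure.prod_apply hs, Measure.smul_apply, Measure.prod_apply hs, smul_eq_mul,
    ← lintegral_const_mul' _ _ hc]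
  simp

theorem snoc_cons_comm {m : ℕ} (ζ : ℂ) (u : Fin m → ℂ) (s : ℂ) :
    (Fin.snoc (Fin.cons ζ u : Fin (m+1) → ℂ) s : Fin (m+2) → ℂ) =
      Fin.cons ζ (Fin.snoc u s) := by
  funext j
  cases j using Fin.cases with
  | zero =>
    have h0 : (0 : Fin (m+2)) = Fin.castSucc 0 := rfl
    rw [h0, Fin.snoc_castSucc]
    simp
  | succ i =>
    cases i using Fin.lastCases with
    | last =>
      have : (Fin.last m).succ = Fin.last (m+1) := rfl
      rw [this, Fin.snoc_last, ← this, Fin.cons_succ, Fin.snoc_last]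
    | cast k =>
      rw [Fin.cons_succ, Fin.snoc_castSucc, Fin.succ_castSucc, Fin.snoc_castSucc, Fin.cons_succ]

theorem sum_abs_cons {m : ℕ} (ζ : ℂ) (u : Fin m → ℂ) :
    ∑ j : Fin (m+1), ‖(Fin.cons ζ u : Fin (m+1) → ℂ) j‖ ^ 2 =
      ‖ζ‖ ^ 2 + ∑ j : Fin m, ‖u j‖ ^ 2 := by
  rw [Fin.sum_univ_succ]
  simp

/-- cons as a measurable equiv `ℂ × (Fin m → ℂ) ≃ᵐ (Fin (m+1) → ℂ)`. -/
def consEquiv (m : ℕ) : ℂ × (Fin m → ℂ) ≃ᵐ (Fin (m+1) → ℂ) :=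
  (MeasurableEquiv.piFinSuccAbove (fun _ : Fin (m+1) => ℂ) 0).symm

theorem consEquiv_apply {m : ℕ} (ζ : ℂ) (u : Fin m → ℂ) :
    consEquiv m (ζ, u) = Fin.cons ζ u := by
  funext j
  cases j using Fin.cases with
  | zero => simp [consEquiv, MeasurableEquiv.piFinSuccAbove]
  | succ i => simp [consEquiv, MeasurableEquiv.piFinSuccAbove, Fin.zero_succAbove]

theorem consEquiv_mp (m : ℕ) : MeasurePreserving (consEquiv m) volume volume :=
  (volume_preserving_piFinSuccAbove (fun _ : Fin (m+1) => ℂ) 0).symm _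

/-- snoc as a measurable equiv `ℂ × (Fin m → ℂ) ≃ᵐ (Fin (m+1) → ℂ)` (new coord last). -/
def snocEquiv (m : ℕ) : ℂ × (Fin m → ℂ) ≃ᵐ (Fin (m+1) → ℂ) :=
  (MeasurableEquiv.piFinSuccAbove (fun _ : Fin (m+1) => ℂ) (Fin.last m)).symm

theorem snocEquiv_apply {m : ℕ} (s : ℂ) (u : Fin m → ℂ) :
    snocEquiv m (s, u) = Fin.snoc u s := by
  funext j
  cases j using Fin.lastCases with
  | last => simp [snocEquiv, MeasurableEquiv.piFinSuccAbove]
  | cast i => simp [snocEquiv, MeasurableEquiv.piFinSuccAbove, Fin.succAbove_last]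

theorem snocEquiv_mp (m : ℕ) : MeasurePreserving (snocEquiv m) volume volume :=
  (volume_preserving_piFinSuccAbove (fun _ : Fin (m+1) => ℂ) (Fin.last m)).symm _

theorem measurable_sumSq (m : ℕ) :
    Measurable fun u : Fin m → ℂ => ((∑ j, ‖u j‖ ^ 2 : ℝ) : ℂ) :=
  Complex.measurable_ofReal.comp <| Finset.measurable_sum _ fun j _ =>
    (continuous_norm.measurable.comp (measurable_pi_apply j)).pow_const 2

/-- The shear `(u, s) ↦ (u, s + i∑|uⱼ|²)`. -/
def shearEquiv (m : ℕ) : ((Fin m → ℂ) × ℂ) ≃ᵐ ((Fin m → ℂ) × ℂ) where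
  toEquiv :=
  { toFun := fun q => (q.1, q.2 + Complex.I * ((∑ j, ‖q.1 j‖ ^ 2 : ℝ) : ℂ))
    invFun := fun q => (q.1, q.2 - Complex.I * ((∑ j, ‖q.1 j‖ ^ 2 : ℝ) : ℂ))
    left_inv := fun q => by simp
    right_inv := fun q => by simp }
  measurable_toFun :=
    measurable_fst.prodMk (measurable_snd.add
      (measurable_const.mul ((measurable_sumSq m).comp measurable_fst)))
  measurable_invFun :=
    measurable_fst.prodMk (measurable_snd.sub
      (measurable_const.mul ((measurable_sumSq m).comp measurable_fst)))

theorem shearEquiv_mp (m : ℕ) : MeasurePreserving (shearEquiv m) volume volume := by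
  rw [Measure.volume_eq_prod]
  exact (MeasurePreserving.id volume).skew_product
    (g := fun (u : Fin m → ℂ) (s : ℂ) => s + Complex.I * ((∑ j, ‖u j‖ ^ 2 : ℝ) : ℂ))
    (measurable_snd.add (measurable_const.mul ((measurable_sumSq m).comp measurable_fst)))
    (Filter.Eventually.of_forall fun u =>
      map_add_right_eq_self volume (Complex.I * ((∑ j, ‖u j‖ ^ 2 : ℝ) : ℂ)))

/-- `((u,t),ζ) ↦ (cons ζ u, t)`. -/
def xiEquiv (m : ℕ) : (((Fin m → ℂ) × ℝ) × ℂ) ≃ᵐ ((Fin (m+1) → ℂ) × ℝ) :=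
  MeasurableEquiv.prodComm.trans (MeasurableEquiv.prodAssoc.symm.trans
    ((consEquiv m).prodCongr (MeasurableEquiv.refl ℝ)))

theorem xiEquiv_apply {m : ℕ} (u : Fin m → ℂ) (t : ℝ) (ζ : ℂ) :
    xiEquiv m ((u, t), ζ) = (Fin.cons ζ u, t) := by
  show (consEquiv m (ζ, u), t) = _
  rw [consEquiv_apply]

theorem xiEquiv_mp (m : ℕ) : MeasurePreserving (xiEquiv m) volume volume := by
  have h1 : MeasurePreserving (MeasurableEquiv.prodComm :
      (((Fin m → ℂ) × ℝ) × ℂ) ≃ᵐ (ℂ × ((Fin m → ℂ) × ℝ))) volume volume :=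
    Measure.measurePreserving_swap
  have h2 : MeasurePreserving (MeasurableEquiv.prodAssoc.symm :
      (ℂ × ((Fin m → ℂ) × ℝ)) ≃ᵐ ((ℂ × (Fin m → ℂ)) × ℝ)) volume volume :=
    (measurePreserving_prodAssoc volume volume volume).symm _
  have h3 : MeasurePreserving ((consEquiv m).prodCongr (MeasurableEquiv.refl ℝ))
      volume volume :=
    (consEquiv_mp m).prod (MeasurePreserving.id volume)
  exact (h3.comp h2).comp h1

/-- `((u,t),y) ↦ snoc u (t + i(y + ∑|uⱼ|²))`. -/
def lamEquiv (m : ℕ) : (((Fin m → ℂ) × ℝ) × ℝ) ≃ᵐ (Fin (m+1) → ℂ) :=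
  MeasurableEquiv.prodAssoc.trans
    (((MeasurableEquiv.refl (Fin m → ℂ)).prodCongr Complex.measurableEquivRealProd.symm).trans
      ((shearEquiv m).trans (MeasurableEquiv.prodComm.trans (snocEquiv m))))

theorem lamEquiv_apply {m : ℕ} (u : Fin m → ℂ) (t y : ℝ) :
    lamEquiv m ((u, t), y) =
      Fin.snoc u ((t : ℂ) + Complex.I * ((y + ∑ j, ‖u j‖ ^ 2 : ℝ) : ℂ)) := by
  have h : lamEquiv m ((u, t), y) = snocEquiv m
      ((Complex.measurableEquivRealProd.symm (t, y) +
        Complex.I * ((∑ j, ‖u j‖ ^ 2 : ℝ) : ℂ)), u) := rfl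
  have hc : Complex.measurableEquivRealProd.symm (t, y) = (t : ℂ) + (y : ℝ) * Complex.I := by
    simp [Complex.measurableEquivRealProd, Complex.ext_iff]
  have hval : Complex.measurableEquivRealProd.symm (t, y) +
      Complex.I * ((∑ j, ‖u j‖ ^ 2 : ℝ) : ℂ) =
      (t : ℂ) + Complex.I * ((y + ∑ j, ‖u j‖ ^ 2 : ℝ) : ℂ) := by
    rw [hc]; push_cast; ring
  rw [h, hval, snocEquiv_apply]

theorem lamEquiv_mp (m : ℕ) : MeasurePreserving (lamEquiv m) volume volume := by
  have h1 : MeasurePreserving (MeasurableEquiv.prodAssoc :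
      (((Fin m → ℂ) × ℝ) × ℝ) ≃ᵐ ((Fin m → ℂ) × (ℝ × ℝ))) volume volume :=
    measurePreserving_prodAssoc volume volume volume
  have h2 : MeasurePreserving
      ((MeasurableEquiv.refl (Fin m → ℂ)).prodCongr Complex.measurableEquivRealProd.symm)
      volume volume :=
    (MeasurePreserving.id volume).prod
      (Complex.volume_preserving_equiv_real_prod.symm Complex.measurableEquivRealProd)
  have h3 : MeasurePreserving (MeasurableEquiv.prodComm :
      ((Fin m → ℂ) × ℂ) ≃ᵐ (ℂ × (Fin m → ℂ))) volume volume :=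
    Measure.measurePreserving_swap
  exact ((snocEquiv_mp m).comp (h3.comp ((shearEquiv_mp m).comp (h2.comp h1))))

theorem bMap_eq (n : ℕ) (q : (Fin n → ℂ) × ℝ) :
    bMap n q = snocEquiv n
      (((q.2 : ℂ) + Complex.I * ((∑ j : Fin n, ‖q.1 j‖ ^ 2 : ℝ) : ℂ)), q.1) :=
  (snocEquiv_apply _ _).symm

theorem measurable_bMap (n : ℕ) : Measurable (bMap n) := by
  have : bMap n = fun q => snocEquiv n
      (((q.2 : ℂ) + Complex.I * ((∑ j : Fin n, ‖q.1 j‖ ^ 2 : ℝ) : ℂ)), q.1) :=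
    funext (bMap_eq n)
  rw [this]
  exact (snocEquiv n).measurable.comp
    (((Complex.measurable_ofReal.comp measurable_snd).add
      (measurable_const.mul ((measurable_sumSq n).comp measurable_fst))).prodMk measurable_fst)

/-- The full parametrization `((u,t),(y,θ)) ↦ (√y e^{iθ}, snoc u (t + i(y+|u|²)))`. -/
def thetaMap (m : ℕ) : (((Fin m → ℂ) × ℝ) × (ℝ × ℝ)) → (Fin (m + 2) → ℂ) := fun q =>
  consEquiv (m + 1) (sqPolarC q.2, lamEquiv m (q.1, q.2.1))

theorem measurable_thetaMap (m : ℕ) : Measurable (thetaMap m) :=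
  (consEquiv (m+1)).measurable.comp
    ((measurable_sqPolarC.comp measurable_snd).prodMk
      ((lamEquiv m).measurable.comp (measurable_fst.prodMk (measurable_fst.comp measurable_snd))))

theorem betaM_eq (m : ℕ) :
    betaM (m + 1) = (2 : ℝ≥0∞)⁻¹ • Measure.map (thetaMap m)
      ((volume : Measure ((Fin m → ℂ) × ℝ)).prod
        ((volume.restrict (Ioi (0:ℝ))).prod (volume.restrict (Ioo (-π) π)))) := by
  set ν : Measure (ℝ × ℝ) := (volume.restrict (Ioi (0:ℝ))).prod (volume.restrict (Ioo (-π) π))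
    with hν
  set P : Measure ((Fin m → ℂ) × ℝ) := volume with hP
  -- Step 1: pull back along xiEquiv
  have h1 : betaM (m + 1) = Measure.map (bMap (m+1) ∘ (xiEquiv m)) volume := by
    rw [betaM, ← (xiEquiv_mp m).map_eq,
      Measure.map_map (measurable_bMap (m+1)) (xiEquiv m).measurable]
  -- Step 2: volume on (U×ℝ)×ℂ as 2⁻¹ • pushforward of P ⊗ ν
  have h2 : (volume : Measure (((Fin m → ℂ) × ℝ) × ℂ)) =
      (2 : ℝ≥0∞)⁻¹ • Measure.map (Prod.map id sqPolarC) (P.prod ν) := by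
    rw [← Measure.map_prod_map _ _ measurable_id measurable_sqPolarC, Measure.map_id,
      map_sqPolarC, prod_smul_right _ _ _ (by norm_num), Measure.volume_eq_prod, smul_smul,
      ENNReal.inv_mul_cancel (by norm_num) (by norm_num), one_smul]
  rw [h1, h2, Measure.map_smul,
    Measure.map_map (by exact (measurable_bMap (m+1)).comp (xiEquiv m).measurable)
      (measurable_id.prodMap measurable_sqPolarC)]
  congr 1
  -- Step 3: the two maps agree a.e.
  refine Measure.map_congr ?_
  have hae : ∀ᵐ q : ((Fin m → ℂ) × ℝ) × (ℝ × ℝ) ∂(P.prod ν), 0 < q.2.1 := by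
    rw [ae_iff]
    have hset : {q : ((Fin m → ℂ) × ℝ) × (ℝ × ℝ) | ¬ 0 < q.2.1} =
        univ ×ˢ (Iic (0:ℝ) ×ˢ univ) := by
      ext q; simp [not_lt]
    rw [hset, Measure.prod_prod, Measure.prod_prod,
      Measure.restrict_apply measurableSet_Iic]
    have : Iic (0:ℝ) ∩ Ioi 0 = ∅ := by
      ext x; simp only [mem_inter_iff, mem_Iic, mem_Ioi, mem_empty_iff_false, iff_false]
      rintro ⟨h1, h2⟩; linarith
    rw [this]
    simp
  filter_upwards [hae] with q hq
  obtain ⟨⟨u, t⟩, y, θ⟩ := q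
  simp only [Function.comp_apply, Prod.map_apply, id_eq]
  rw [xiEquiv_apply, bMap]
  simp only
  rw [sum_abs_cons, snoc_cons_comm]
  have habs : ‖sqPolarC (y, θ)‖ ^ 2 = y := by
    rw [sqPolarC]
    simp only [norm_mul, Complex.norm_exp, Complex.norm_real]
    have : (((θ : ℝ) : ℂ) * Complex.I).re = 0 := by simp
    rw [this, Real.exp_zero, mul_one, Real.norm_of_nonneg (Real.sqrt_nonneg _),
      Real.sq_sqrt (le_of_lt hq)]
  rw [thetaMap, consEquiv_apply, lamEquiv_apply]
  simp only
  rw [habs]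

theorem lamEquiv_preimage (m : ℕ) :
    (lamEquiv m) ⁻¹' (Siegel m) = (univ : Set ((Fin m → ℂ) × ℝ)) ×ˢ Ioi (0:ℝ) := by
  ext ⟨⟨u, t⟩, y⟩
  simp only [mem_preimage, Siegel, mem_setOf_eq, lamEquiv_apply, Fin.snoc_castSucc,
    Fin.snoc_last, mem_prod, mem_univ, true_and, mem_Ioi]
  rw [Complex.add_im]
  simp only [Complex.ofReal_im, Complex.mul_im, Complex.I_re, Complex.I_im, Complex.ofReal_re,
    zero_mul, one_mul, zero_add]
  constructor
  · intro h; linarith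
  · intro h; linarith

theorem rhoSelf_lamEquiv {m : ℕ} (u : Fin m → ℂ) (t y : ℝ) :
    rhoSelf m (lamEquiv m ((u, t), y)) = y := by
  simp only [rhoSelf, lamEquiv_apply, Fin.snoc_castSucc, Fin.snoc_last]
  rw [Complex.add_im]
  simp only [Complex.ofReal_im, Complex.mul_im, Complex.I_re, Complex.I_im, Complex.ofReal_re,
    zero_mul, one_mul, zero_add]
  ring

theorem measurableSet_Siegel (m : ℕ) : MeasurableSet (Siegel m) := by
  apply measurableSet_lt
  · exact Finset.measurable_sum _ fun j _ =>
      (continuous_norm.measurable.comp (measurable_pi_apply _)).pow_const 2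
  · exact Complex.measurable_im.comp (measurable_pi_apply _)

/-- Corollary 3.4, case `k = n-1`: for `n = m+1 ≥ 1` and `f ∈ L¹(b𝒰ⁿ, β)`,
`∫_{b𝒰ⁿ} f dβ = π ∫_{𝒰^{n-1}} (1/(2π)) ∫_0^{2π} f(√(ρ_{n-1}(w)) e^{iθ}, w) dθ dV(w)`. -/
theorem forelli_polar_decomposition (m : ℕ)
    (f : (Fin (m + 2) → ℂ) → ℂ) (hf : Integrable f (betaM (m + 1))) :
    (∫ z, f z ∂betaM (m + 1)) =
      (π : ℂ) *
        ∫ w in Siegel m,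
          ((1 / (2 * π) : ℝ) : ℂ) *
            ∫ θ in (0 : ℝ)..(2 * π),
              f (Fin.cons (((Real.sqrt (rhoSelf m w) : ℝ) : ℂ) *
                Complex.exp ((θ : ℂ) * Complex.I)) w) := by
  set ν₁ : Measure ℝ := volume.restrict (Ioi (0:ℝ)) with hν₁
  set ν₂ : Measure ℝ := volume.restrict (Ioo (-π) π) with hν₂
  set P : Measure ((Fin m → ℂ) × ℝ) := volume with hP
  set Θ := thetaMap m with hΘ
  -- integrability of f ∘ Θ
  have h0 : Integrable f (Measure.map Θ (P.prod (ν₁.prod ν₂))) := by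
    have := hf
    rw [betaM_eq m] at this
    exact (integrable_smul_measure (by norm_num) (by norm_num)).mp this
  have hmapint : Integrable (fun q => f (Θ q)) (P.prod (ν₁.prod ν₂)) :=
    (integrable_map_measure h0.aestronglyMeasurable (measurable_thetaMap m).aemeasurable).mp h0
  -- reassociate
  have hA : MeasurePreserving
      (MeasurableEquiv.prodAssoc :
        ((((Fin m → ℂ) × ℝ) × ℝ) × ℝ) ≃ᵐ (((Fin m → ℂ) × ℝ) × (ℝ × ℝ)))
      ((P.prod ν₁).prod ν₂) (P.prod (ν₁.prod ν₂)) :=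
    measurePreserving_prodAssoc P ν₁ ν₂
  have hInt' : Integrable (fun r => f (Θ (MeasurableEquiv.prodAssoc r)))
      ((P.prod ν₁).prod ν₂) :=
    (hA.integrable_comp_emb MeasurableEquiv.prodAssoc.measurableEmbedding).mpr hmapint
  -- the inner function
  set G : ((Fin m → ℂ) × ℝ) × ℝ → ℂ := fun q =>
    ∫ θ in (0:ℝ)..(2*π), f (Θ (q.1, (q.2, θ))) with hG_def
  have hGIoo : ∀ q : ((Fin m → ℂ) × ℝ) × ℝ,
      (∫ θ, f (Θ (MeasurableEquiv.prodAssoc (q, θ))) ∂ν₂) = G q := by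
    intro q
    have hper : Function.Periodic (fun θ : ℝ => f (Θ (q.1, (q.2, θ)))) (2*π) := by
      intro θ
      simp only [hΘ, thetaMap, sqPolarC]
      congr 3
      push_cast
      rw [add_mul, Complex.exp_add, Complex.exp_two_pi_mul_I, mul_one]
    have e1 : (∫ θ, f (Θ (MeasurableEquiv.prodAssoc (q, θ))) ∂ν₂) =
        ∫ θ in Ioo (-π) π, f (Θ (q.1, (q.2, θ))) := rfl
    rw [e1, setIntegral_congr_set Ioo_ae_eq_Ioc,
      ← intervalIntegral.integral_of_le (by linarith [Real.pi_pos])]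
    have h2 := hper.intervalIntegral_add_eq (-π) 0
    simp only [zero_add] at h2
    rw [show -π + 2*π = π by ring] at h2
    rw [h2]
  have hGint : Integrable G (P.prod ν₁) := by
    have := hInt'.integral_prod_left
    refine this.congr (Filter.Eventually.of_forall fun q => ?_)
    exact hGIoo q
  -- LHS computation
  have hLHS : (∫ z, f z ∂betaM (m + 1)) = ((1/2 : ℝ)) • ∫ q, G q ∂(P.prod ν₁) := by
    rw [betaM_eq m, integral_smul_measure,
      integral_map (measurable_thetaMap m).aemeasurable h0.aestronglyMeasurable,
      ← hA.integral_comp MeasurableEquiv.prodAssoc.measurableEmbedding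
        (fun q => f (thetaMap m q)),
      integral_prod _ hInt']
    have : ∀ q : ((Fin m → ℂ) × ℝ) × ℝ,
        (∫ θ, f (Θ (MeasurableEquiv.prodAssoc (q, θ))) ∂ν₂) = G q := hGIoo
    rw [show (2 : ℝ≥0∞)⁻¹.toReal = (1/2 : ℝ) by simp]
    congr 1
    exact integral_congr_ae (Filter.Eventually.of_forall this)
  -- RHS computation
  have hrestr : (volume : Measure (Fin (m+1) → ℂ)).restrict (Siegel m) =
      Measure.map (lamEquiv m) (P.prod ν₁) := by
    rw [← (lamEquiv_mp m).map_eq,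
      Measure.restrict_map (lamEquiv m).measurable (measurableSet_Siegel m),
      lamEquiv_preimage]
    congr 1
    rw [Measure.volume_eq_prod, ← Measure.prod_restrict, Measure.restrict_univ]
  have hRHS : ∫ w in Siegel m,
      ((1 / (2 * π) : ℝ) : ℂ) *
        ∫ θ in (0 : ℝ)..(2 * π),
          f (Fin.cons (((Real.sqrt (rhoSelf m w) : ℝ) : ℂ) *
            Complex.exp ((θ : ℂ) * Complex.I)) w) =
      ((1 / (2 * π) : ℝ) : ℂ) * ∫ q, G q ∂(P.prod ν₁) := by
    rw [hrestr, integral_map_equiv, ← integral_const_mul]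
    refine integral_congr_ae (Filter.Eventually.of_forall fun q => ?_)
    obtain ⟨⟨u, t⟩, y⟩ := q
    have hth : (∫ θ in (0:ℝ)..(2*π),
        f (Fin.cons (((Real.sqrt (rhoSelf m (lamEquiv m ((u, t), y))) : ℝ) : ℂ) *
          Complex.exp ((θ : ℂ) * Complex.I)) (lamEquiv m ((u, t), y)))) = G ((u, t), y) := by
      rw [hG_def]
      refine intervalIntegral.integral_congr fun θ _ => ?_
      rw [rhoSelf_lamEquiv, hΘ, thetaMap, consEquiv_apply]
      rfl
    dsimp only
    rw [hth]
  rw [hLHS, hRHS, ← mul_assoc]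
  rw [Complex.real_smul]
  congr 1
  push_cast
  have hπ : (π : ℂ) ≠ 0 := Complex.ofReal_ne_zero.mpr Real.pi_ne_zero
  field_simp
end
end

section
/- Let n ≥ 1 be an integer and 0 < p < ∞. Let g : 𝒰^{n−1} → ℂ be holomorphic with ∫_{𝒰^{n−1}} |g|^p dV < ∞, and define G on 𝒰ⁿ by G(z₁, z̃) := g(z̃) for z = (z₁, z̃) ∈ ℂ × ℂⁿ with z ∈ 𝒰ⁿ. Then G is holomorphic on 𝒰ⁿ and for every t > 0, ∫_{b𝒰ⁿ} |G(z + t𝐢)|^p dβ(z) = π · ∫_{{w ∈ 𝒰^{n−1} : ρ_{n−1}(w) > t}} |g(w)|^p dV(w) ≤ π · ∫_{𝒰^{n−1}} |g|^p dV; consequently sup_{t>0} ∫_{b𝒰ⁿ} |G(z + t𝐢)|^p dβ(z) ≤ π · ∫_{𝒰^{n−1}} |g|^p dV, i.e. G ∈ H^p(𝒰ⁿ) with ‖G‖_{H^p}^p ≤ π ‖g‖_{A^p(𝒰^{n−1})}^p. -/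
open MeasureTheory Real

noncomputable section

open Set
open scoped ENNReal NNReal

lemma siegel_isOpen (n : ℕ) : IsOpen (Siegel n) := by
  apply isOpen_lt
  · exact continuous_finset_sum _ fun j _ =>
      (continuous_norm.comp (continuous_apply _)).pow 2
  · exact Complex.continuous_im.comp (continuous_apply _)

lemma measurable_indicator_of_continuousOn {α β : Type*} [TopologicalSpace α] [MeasurableSpace α]
    [OpensMeasurableSpace α] [TopologicalSpace β] [MeasurableSpace β] [BorelSpace β] [Zero β]
    {s : Set α} (hs : IsOpen s) {f : α → β} (hf : ContinuousOn f s) :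
    Measurable (s.indicator f) := by
  apply measurable_of_isOpen
  intro u hu
  obtain ⟨v, v_open, hv⟩ := _root_.continuousOn_iff'.1 hf u hu
  rw [Set.indicator_preimage, Set.ite]
  have : f ⁻¹' u ∩ s = v ∩ s := hv
  rw [this]
  exact ((v_open.inter hs).measurableSet).union
    ((measurable_const (by measurability)).diff hs.measurableSet)


lemma vol_preimage_sq_abs (a b : ℝ) (hab : a < b) :
    volume ((fun z : ℂ => ‖z‖ ^ 2) ⁻¹' Ioc a b)
      = ENNReal.ofReal π * ENNReal.ofReal (b - max a 0) := by
  rcases lt_or_ge b 0 with hb | hb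
  · have h1 : (fun z : ℂ => ‖z‖ ^ 2) ⁻¹' Ioc a b = ∅ := by
      ext z; simp only [mem_preimage, mem_Ioc, mem_empty_iff_false, iff_false, not_and, not_le]
      intro _; exact lt_of_lt_of_le hb (sq_nonneg _)
    rw [h1]
    have : b - max a 0 < 0 := by
      have := le_max_right a 0; nlinarith
    simp [ENNReal.ofReal_eq_zero.2 this.le]
  · have h1 : (fun z : ℂ => ‖z‖ ^ 2) ⁻¹' Ioc a b
        = Metric.closedBall (0:ℂ) (Real.sqrt b) \ {z : ℂ | ‖z‖ ^ 2 ≤ a} := by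
      ext z
      simp only [mem_preimage, mem_Ioc, mem_diff, Metric.mem_closedBall, mem_setOf_eq,
        Complex.dist_eq, sub_zero, not_le]
      constructor
      · rintro ⟨h2, h3⟩
        exact ⟨by
          rw [← Real.sqrt_sq (norm_nonneg z)]
          exact Real.sqrt_le_sqrt h3, h2⟩
      · rintro ⟨h2, h3⟩
        refine ⟨h3, ?_⟩
        calc ‖z‖ ^ 2 ≤ Real.sqrt b ^ 2 := by
              apply pow_le_pow_left₀ (norm_nonneg z) h2
          _ = b := Real.sq_sqrt hb
    have hTsub : {z : ℂ | ‖z‖ ^ 2 ≤ a} ⊆ Metric.closedBall (0:ℂ) (Real.sqrt b) := by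
      intro z hz
      simp only [mem_setOf_eq] at hz
      simp only [Metric.mem_closedBall, Complex.dist_eq, sub_zero]
      rw [← Real.sqrt_sq (norm_nonneg z)]
      exact Real.sqrt_le_sqrt (hz.trans hab.le)
    have hTvol : volume {z : ℂ | ‖z‖ ^ 2 ≤ a} = ENNReal.ofReal (max a 0) * NNReal.pi := by
      rcases le_or_gt 0 a with ha | ha
      · have : {z : ℂ | ‖z‖ ^ 2 ≤ a} = Metric.closedBall (0:ℂ) (Real.sqrt a) := by
          ext z
          simp only [mem_setOf_eq, Metric.mem_closedBall, Complex.dist_eq, sub_zero]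
          constructor
          · intro h; rw [← Real.sqrt_sq (norm_nonneg z)]; exact Real.sqrt_le_sqrt h
          · intro h
            calc ‖z‖ ^ 2 ≤ Real.sqrt a ^ 2 := pow_le_pow_left₀ (norm_nonneg z) h 2
              _ = a := Real.sq_sqrt ha
        rw [this, Complex.volume_closedBall, ← ENNReal.ofReal_pow (Real.sqrt_nonneg a),
          Real.sq_sqrt ha, max_eq_left ha]
      · have : {z : ℂ | ‖z‖ ^ 2 ≤ a} = ∅ := by
          ext z; simp only [mem_setOf_eq, mem_empty_iff_false, iff_false, not_le]
          exact lt_of_lt_of_le ha (sq_nonneg _)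
        rw [this, max_eq_right ha.le]
        simp
    have hmeas : MeasurableSet {z : ℂ | ‖z‖ ^ 2 ≤ a} := by
      exact measurableSet_le ((continuous_norm.pow 2).measurable) measurable_const
    rw [h1, measure_diff hTsub hmeas.nullMeasurableSet
      (by rw [hTvol]; exact ENNReal.mul_ne_top ENNReal.ofReal_ne_top ENNReal.coe_ne_top),
      Complex.volume_closedBall, hTvol, ← ENNReal.ofReal_pow (Real.sqrt_nonneg b),
      Real.sq_sqrt hb]
    rw [← ENNReal.sub_mul (fun _ _ => ENNReal.coe_ne_top),
      ← ENNReal.ofReal_sub _ (le_max_right a 0)]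
    rw [mul_comm, ← ENNReal.ofReal_coe_nnreal, NNReal.coe_real_pi]

lemma map_sq_abs : Measure.map (fun z : ℂ => ‖z‖ ^ 2) volume
    = (ENNReal.ofReal π) • (volume.restrict (Ioi (0:ℝ))) := by
  have hm : Measurable fun z : ℂ => ‖z‖ ^ 2 :=
    (continuous_norm.pow 2).measurable
  refine MeasureTheory.Measure.ext_of_Ioc' _ _ (fun a b hab => ?_) (fun a b hab => ?_)
  · rw [Measure.map_apply hm measurableSet_Ioc, vol_preimage_sq_abs a b hab]
    exact ENNReal.mul_ne_top ENNReal.ofReal_ne_top ENNReal.ofReal_ne_top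
  · rw [Measure.map_apply hm measurableSet_Ioc, vol_preimage_sq_abs a b hab,
      Measure.smul_apply, Measure.restrict_apply measurableSet_Ioc]
    have : Ioc a b ∩ Ioi 0 = Ioc (max a 0) b := by
      ext x
      simp only [mem_inter_iff, mem_Ioc, mem_Ioi, max_lt_iff]
      tauto
    rw [this, Real.volume_Ioc, smul_eq_mul]

lemma lintegral_comp_sq_abs {f : ℝ → ℝ≥0∞} (hf : Measurable f) :
    ∫⁻ z : ℂ, f (‖z‖ ^ 2) = ENNReal.ofReal π * ∫⁻ u in Ioi (0:ℝ), f u := by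
  rw [← lintegral_map (g := fun z : ℂ => ‖z‖ ^ 2) hf ((continuous_norm.pow 2).measurable), map_sq_abs,
    lintegral_smul_measure, smul_eq_mul]

lemma lintegral_Ioi_shift (k : ℝ → ℝ≥0∞) (r : ℝ) :
    ∫⁻ y in Ioi r, k y = ∫⁻ u in Ioi (0:ℝ), k (u + r) := by
  rw [← lintegral_indicator measurableSet_Ioi, ← lintegral_indicator measurableSet_Ioi,
    ← lintegral_add_right_eq_self (fun y => (Ioi r).indicator k y) r]
  congr 1
  ext u
  by_cases hu : 0 < u
  · rw [Set.indicator_of_mem (by simpa using hu), Set.indicator_of_mem (by simpa using hu)]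
  · rw [Set.indicator_of_notMem (by simpa using hu),
      Set.indicator_of_notMem (by simpa using hu)]


lemma measurable_snoc (m : ℕ) :
    Measurable fun pr : (Fin m → ℂ) × ℂ => (Fin.snoc pr.1 pr.2 : Fin (m+1) → ℂ) := by
  refine measurable_pi_lambda _ fun j => ?_
  induction j using Fin.lastCases with
  | last => simpa [Fin.snoc_last] using measurable_snd
  | cast k => simpa [Fin.snoc_castSucc, Function.comp_def] using (measurable_pi_apply k).comp measurable_fst

lemma measurable_sumsq (m : ℕ) :
    Measurable fun w' : Fin m → ℂ => (∑ j, ‖w' j‖ ^ 2 : ℝ) :=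
  (continuous_finset_sum _ fun j _ =>
    (continuous_norm.comp (continuous_apply _)).pow 2).measurable

lemma czz (x y : ℝ) : (⟨x, y⟩ : ℂ) = (x : ℂ) + Complex.I * (y : ℂ) := by
  apply Complex.ext <;> simp

lemma core (m : ℕ) (t : ℝ) (F : (Fin (m + 1) → ℂ) → ℝ≥0∞) (hF : Measurable F) :
    (∫⁻ q : (Fin (m + 1) → ℂ) × ℝ,
        F (Fin.snoc (Fin.tail q.1)
          ((q.2 : ℂ) + Complex.I * (((∑ k, ‖q.1 k‖ ^ 2) + t : ℝ) : ℂ))))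
      = ENNReal.ofReal π *
        ∫⁻ w in {w : Fin (m + 1) → ℂ |
            (∑ j : Fin m, ‖w j.castSucc‖ ^ 2) + t < (w (Fin.last m)).im}, F w := by
  set S : (Fin m → ℂ) → ℝ := fun w' => ∑ j, ‖w' j‖ ^ 2 with hSdef
  set H : (Fin m → ℂ) → ℝ → ℝ → ℝ≥0∞ :=
    fun w' x v => F (Fin.snoc w' ((x : ℂ) + Complex.I * (v : ℂ))) with hHdef
  have mS : Measurable S := measurable_sumsq m
  have mS1 : Measurable fun z' : Fin (m+1) → ℂ => (∑ k, ‖z' k‖ ^ 2 : ℝ) :=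
    measurable_sumsq (m+1)
  have mH : Measurable fun r : ((Fin m → ℂ) × ℝ) × ℝ => H r.1.1 r.1.2 r.2 := by
    exact hF.comp ((measurable_snoc m).comp ((measurable_fst.comp measurable_fst).prodMk
      ((Complex.measurable_ofReal.comp (measurable_snd.comp measurable_fst)).add
        (measurable_const.mul (Complex.measurable_ofReal.comp measurable_snd)))))
  -- generic composition helper
  have mHc : ∀ {α : Type} [inst : MeasurableSpace α] {a : α → Fin m → ℂ} {b c : α → ℝ},
      Measurable a → Measurable b → Measurable c →
      Measurable fun q => H (a q) (b q) (c q) := by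
    intro α inst a b c ha hb hc
    exact mH.comp ((ha.prodMk hb).prodMk hc)
  have mtail : Measurable fun z' : Fin (m+1) → ℂ => Fin.tail z' :=
    measurable_pi_lambda _ fun k => measurable_pi_apply k.succ
  have mcons : Measurable fun pr : ℂ × (Fin m → ℂ) => (Fin.cons pr.1 pr.2 : Fin (m+1) → ℂ) := by
    refine measurable_pi_lambda _ fun j => ?_
    induction j using Fin.cases with
    | zero => simpa [Fin.cons_zero] using measurable_fst
    | succ k => simpa [Fin.cons_succ, Function.comp_def] using (measurable_pi_apply k).comp measurable_snd
  -- the integrand of the LHS, as a measurable function on the product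
  have mLHS : Measurable fun q : (Fin (m+1) → ℂ) × ℝ =>
      H (Fin.tail q.1) q.2 ((∑ k, ‖q.1 k‖ ^ 2) + t) :=
    mHc (mtail.comp measurable_fst) measurable_snd ((mS1.comp measurable_fst).add_const t)
  have mK : Measurable fun z' : Fin (m+1) → ℂ =>
      ∫⁻ s : ℝ, H (Fin.tail z') s ((∑ k, ‖z' k‖ ^ 2) + t) := by
    apply Measurable.lintegral_prod_right'
      (f := fun q : (Fin (m+1) → ℂ) × ℝ =>
        H (Fin.tail q.1) q.2 ((∑ k, ‖q.1 k‖ ^ 2) + t))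
    exact mLHS
  have mInner2 : Measurable fun r : ℝ × (Fin m → ℂ) =>
      ∫⁻ s : ℝ, H r.2 s (r.1 + S r.2 + t) := by
    apply Measurable.lintegral_prod_right'
      (f := fun r : (ℝ × (Fin m → ℂ)) × ℝ => H r.1.2 r.2 (r.1.1 + S r.1.2 + t))
    exact mHc ((measurable_snd.comp measurable_fst)) measurable_snd
      (((measurable_fst.comp measurable_fst).add
        (mS.comp (measurable_snd.comp measurable_fst))).add_const t)
  have mf : Measurable fun u : ℝ => ∫⁻ w' : Fin m → ℂ, ∫⁻ s : ℝ, H w' s (u + S w' + t) := by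
    apply Measurable.lintegral_prod_right'
      (f := fun r : ℝ × (Fin m → ℂ) => ∫⁻ s : ℝ, H r.2 s (r.1 + S r.2 + t))
    exact mInner2
  -- LHS chain
  have step1 : (∫⁻ q : (Fin (m + 1) → ℂ) × ℝ,
        F (Fin.snoc (Fin.tail q.1)
          ((q.2 : ℂ) + Complex.I * (((∑ k, ‖q.1 k‖ ^ 2) + t : ℝ) : ℂ))))
      = ∫⁻ z' : Fin (m+1) → ℂ, ∫⁻ s : ℝ,
          H (Fin.tail z') s ((∑ k, ‖z' k‖ ^ 2) + t) := by
    rw [Measure.volume_eq_prod]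
    exact lintegral_prod _ mLHS.aemeasurable
  have step2 : (∫⁻ z' : Fin (m+1) → ℂ, ∫⁻ s : ℝ,
          H (Fin.tail z') s ((∑ k, ‖z' k‖ ^ 2) + t))
      = ∫⁻ pr : ℂ × (Fin m → ℂ), ∫⁻ s : ℝ, H pr.2 s ((‖pr.1‖ ^ 2 + S pr.2) + t) := by
    rw [← ((volume_preserving_piFinSuccAbove (fun _ : Fin (m+1) => ℂ) 0).symm _).lintegral_comp
      mK]
    refine lintegral_congr fun pr => ?_
    have he : (MeasurableEquiv.piFinSuccAbove (fun _ : Fin (m+1) => ℂ) 0).symm pr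
        = Fin.cons pr.1 pr.2 := by
      simp [MeasurableEquiv.piFinSuccAbove_symm_apply, Fin.insertNthEquiv]
    rw [he]
    refine lintegral_congr fun s => ?_
    simp only [Fin.tail_cons, Fin.sum_univ_succ, Fin.cons_zero, Fin.cons_succ, hSdef]
  have step3 : (∫⁻ pr : ℂ × (Fin m → ℂ), ∫⁻ s : ℝ,
        H pr.2 s ((‖pr.1‖ ^ 2 + S pr.2) + t))
      = ∫⁻ a : ℂ, ∫⁻ w' : Fin m → ℂ, ∫⁻ s : ℝ, H w' s ((‖a‖ ^ 2 + S w') + t) := by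
    rw [Measure.volume_eq_prod]
    refine lintegral_prod _ ?_
    refine Measurable.aemeasurable ?_
    apply Measurable.lintegral_prod_right'
      (f := fun r : (ℂ × (Fin m → ℂ)) × ℝ => H r.1.2 r.2 ((‖r.1.1‖ ^ 2 + S r.1.2) + t))
    refine mHc (measurable_snd.comp measurable_fst) measurable_snd ?_
    exact ((((continuous_norm.measurable.comp
      (measurable_fst.comp measurable_fst)).pow_const 2)).add
      (mS.comp (measurable_snd.comp measurable_fst))).add_const t
  have step4 : (∫⁻ a : ℂ, ∫⁻ w' : Fin m → ℂ, ∫⁻ s : ℝ, H w' s ((‖a‖ ^ 2 + S w') + t))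
      = ENNReal.ofReal π * ∫⁻ u in Ioi (0:ℝ),
          ∫⁻ w' : Fin m → ℂ, ∫⁻ s : ℝ, H w' s (u + S w' + t) := by
    have := lintegral_comp_sq_abs (f := fun u =>
      ∫⁻ w' : Fin m → ℂ, ∫⁻ s : ℝ, H w' s (u + S w' + t)) mf
    rw [← this]
  have step5 : (∫⁻ u in Ioi (0:ℝ), ∫⁻ w' : Fin m → ℂ, ∫⁻ s : ℝ, H w' s (u + S w' + t))
      = ∫⁻ w' : Fin m → ℂ, ∫⁻ s : ℝ, ∫⁻ u in Ioi (0:ℝ), H w' s (u + (S w' + t)) := by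
    rw [lintegral_lintegral_swap]
    · refine lintegral_congr fun w' => ?_
      rw [lintegral_lintegral_swap]
      · refine lintegral_congr fun s => ?_
        refine lintegral_congr fun u => ?_
        ring_nf
      · exact (mHc measurable_const measurable_snd
          ((measurable_fst.add_const (S w')).add_const t)).aemeasurable
    · exact mInner2.aemeasurable
  -- RHS chain
  set T : Set (Fin (m+1) → ℂ) :=
    {w | (∑ j : Fin m, ‖w j.castSucc‖ ^ 2) + t < (w (Fin.last m)).im} with hTdef
  have hT : MeasurableSet T := by
    apply measurableSet_lt
    · exact ((continuous_finset_sum _ fun j _ =>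
        (continuous_norm.comp (continuous_apply _)).pow 2).measurable).add_const t
    · exact Complex.measurable_im.comp (measurable_pi_apply _)
  have r1 : ∫⁻ w in T, F w = ∫⁻ w, T.indicator F w := (lintegral_indicator hT F).symm
  have r2 : (∫⁻ w, T.indicator F w)
      = ∫⁻ pr : ℂ × (Fin m → ℂ), T.indicator F (Fin.snoc pr.2 pr.1) := by
    rw [← ((volume_preserving_piFinSuccAbove (fun _ : Fin (m+1) => ℂ)
      (Fin.last m)).symm _).lintegral_comp (hF.indicator hT)]
    refine lintegral_congr fun pr => ?_
    congr 1
    simp [MeasurableEquiv.piFinSuccAbove_symm_apply, Fin.insertNthEquiv]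
  have mIndSnoc : Measurable fun pr : ℂ × (Fin m → ℂ) => T.indicator F (Fin.snoc pr.2 pr.1) :=
    (hF.indicator hT).comp ((measurable_snoc m).comp (measurable_snd.prodMk measurable_fst))
  have r3 : (∫⁻ pr : ℂ × (Fin m → ℂ), T.indicator F (Fin.snoc pr.2 pr.1))
      = ∫⁻ c : ℂ, ∫⁻ w' : Fin m → ℂ, T.indicator F (Fin.snoc w' c) := by
    rw [Measure.volume_eq_prod]; exact lintegral_prod _ mIndSnoc.aemeasurable
  have r4 : (∫⁻ c : ℂ, ∫⁻ w' : Fin m → ℂ, T.indicator F (Fin.snoc w' c))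
      = ∫⁻ w' : Fin m → ℂ, ∫⁻ c : ℂ, T.indicator F (Fin.snoc w' c) := by
    refine lintegral_lintegral_swap ?_
    exact ((hF.indicator hT).comp ((measurable_snoc m).comp
      (measurable_snd.prodMk measurable_fst))).aemeasurable
  have r5 : ∀ w' : Fin m → ℂ, (∫⁻ c : ℂ, T.indicator F (Fin.snoc w' c))
      = ∫⁻ x : ℝ, ∫⁻ u in Ioi (0:ℝ), H w' x (u + (S w' + t)) := by
    intro w'
    have hJ : Measurable fun c : ℂ => T.indicator F (Fin.snoc w' c) :=
      (hF.indicator hT).comp ((measurable_snoc m).comp (measurable_const.prodMk measurable_id))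
    have hmeas2 : Measurable fun a : ℝ × ℝ =>
        T.indicator F (Fin.snoc w' (Complex.measurableEquivRealProd.symm a)) :=
      hJ.comp Complex.measurableEquivRealProd.symm.measurable
    rw [← (Complex.volume_preserving_equiv_real_prod.symm _).lintegral_comp hJ,
      Measure.volume_eq_prod, lintegral_prod _ hmeas2.aemeasurable]
    refine lintegral_congr fun x => ?_
    have key : ∀ y : ℝ,
        T.indicator F (Fin.snoc w' (Complex.measurableEquivRealProd.symm (x, y)))
          = (Ioi (S w' + t)).indicator (fun y => F (Fin.snoc w' (⟨x, y⟩ : ℂ))) y := by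
      intro y
      rw [Complex.measurableEquivRealProd_symm_apply]
      have hmem : ((Fin.snoc w' (⟨x, y⟩ : ℂ) : Fin (m+1) → ℂ) ∈ T) ↔ S w' + t < y := by
        simp [hTdef, Fin.snoc_castSucc, Fin.snoc_last, hSdef]
      simp only [Set.indicator_apply, hmem, mem_Ioi]
    simp_rw [key]
    rw [lintegral_indicator measurableSet_Ioi,
      lintegral_Ioi_shift (fun y => F (Fin.snoc w' (⟨x, y⟩ : ℂ))) (S w' + t)]
    refine lintegral_congr fun u => ?_
    rw [czz]
  -- assemble
  rw [step1, step2, step3, step4]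
  congr 1
  rw [step5, r1, r2, r3, r4]
  exact lintegral_congr fun w' => (r5 w').symm

/-- Lemma 6.2 (extension): for `n = m+1 ≥ 1`, `0 < p < ∞` and `g ∈ A^p(𝒰^{n-1})`, the
extension `G(z₁, z̃) = g(z̃)` is holomorphic on `𝒰ⁿ` and for every `t > 0`,
`∫_{b𝒰ⁿ} |G(z+t𝐢)|^p dβ(z) = π ∫_{ρ_{n-1} > t} |g|^p dV ≤ π ∫_{𝒰^{n-1}} |g|^p dV`;
consequently `G ∈ H^p(𝒰ⁿ)` with `‖G‖_{H^p}^p ≤ π ‖g‖_{A^p}^p`. -/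
theorem extension_estimate (m : ℕ) (p : ℝ) (hp : 0 < p)
    (g : (Fin (m + 1) → ℂ) → ℂ) (hg : DifferentiableOn ℂ g (Siegel m))
    (hgint : (∫⁻ w in Siegel m, ENNReal.ofReal (‖g w‖ ^ p)) < ⊤)
    (G : (Fin (m + 2) → ℂ) → ℂ)
    (hG : G = fun z => g fun j : Fin (m + 1) => z j.succ) :
    DifferentiableOn ℂ G (Siegel (m + 1)) ∧
    (∀ t : ℝ, 0 < t →
      (∫⁻ z, ENNReal.ofReal (‖G (z + t • iotaPt (m + 1))‖ ^ p) ∂betaM (m + 1)) =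
        ENNReal.ofReal π *
          ∫⁻ w in {w | w ∈ Siegel m ∧ t < rhoSelf m w},
            ENNReal.ofReal (‖g w‖ ^ p)) ∧
    (⨆ t ∈ Set.Ioi (0 : ℝ),
        ∫⁻ z, ENNReal.ofReal (‖G (z + t • iotaPt (m + 1))‖ ^ p) ∂betaM (m + 1)) ≤
      ENNReal.ofReal π * ∫⁻ w in Siegel m, ENNReal.ofReal (‖g w‖ ^ p) := by
  have hπdiff : Differentiable ℂ (fun z : Fin (m + 2) → ℂ => fun j : Fin (m + 1) => z j.succ) :=
    differentiable_pi.mpr fun j =>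
      (ContinuousLinearMap.proj (R := ℂ) (φ := fun _ : Fin (m + 2) => ℂ) j.succ).differentiable
  have hproj : ∀ z : Fin (m + 2) → ℂ, z ∈ Siegel (m + 1) →
      (fun j : Fin (m + 1) => z j.succ) ∈ Siegel m := by
    intro z hz
    show (∑ j : Fin m, ‖z (j.castSucc).succ‖ ^ 2) < (z (Fin.last m).succ).im
    rw [Fin.succ_last]
    calc ∑ j : Fin m, ‖z (j.castSucc).succ‖ ^ 2
        = ∑ j : Fin m, ‖z (j.succ).castSucc‖ ^ 2 := by
          simp only [Fin.succ_castSucc]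
      _ ≤ ∑ k : Fin (m + 1), ‖z k.castSucc‖ ^ 2 := by
          rw [Fin.sum_univ_succ]
          exact le_add_of_nonneg_left (by positivity)
      _ < (z (Fin.last (m + 1))).im := hz
  have hdiff : DifferentiableOn ℂ G (Siegel (m + 1)) := by
    rw [hG]
    exact hg.comp hπdiff.differentiableOn hproj
  -- the measurable modification of g
  set gi : (Fin (m + 1) → ℂ) → ℂ := (Siegel m).indicator g with hgidef
  have hgim : Measurable gi :=
    measurable_indicator_of_continuousOn (siegel_isOpen m) hg.continuousOn
  set F : (Fin (m + 1) → ℂ) → ℝ≥0∞ := fun w => ENNReal.ofReal (‖gi w‖ ^ p)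
    with hFdef
  have hFm : Measurable F :=
    ((Real.continuous_rpow_const hp.le).measurable.comp
      (continuous_norm.measurable.comp hgim)).ennreal_ofReal
  have hbMapMeas : Measurable (bMap (m + 1)) :=
    (measurable_snoc (m + 1)).comp (measurable_fst.prodMk
      ((Complex.measurable_ofReal.comp measurable_snd).add
        (measurable_const.mul (Complex.measurable_ofReal.comp
          ((measurable_sumsq (m + 1)).comp measurable_fst)))))
  have hrho : Measurable (rhoSelf m) := by
    apply Measurable.sub
    · exact Complex.measurable_im.comp (measurable_pi_apply _)
    · exact (continuous_finset_sum _ fun j _ =>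
        (continuous_norm.comp (continuous_apply _)).pow 2).measurable
  have part2 : ∀ t : ℝ, 0 < t →
      (∫⁻ z, ENNReal.ofReal (‖G (z + t • iotaPt (m + 1))‖ ^ p) ∂betaM (m + 1)) =
        ENNReal.ofReal π *
          ∫⁻ w in {w | w ∈ Siegel m ∧ t < rhoSelf m w},
            ENNReal.ofReal (‖g w‖ ^ p) := by
    intro t ht
    set B : Set (Fin (m + 2) → ℂ) :=
      {z | (z (Fin.last (m + 1))).im = ∑ k : Fin (m + 1), ‖z k.castSucc‖ ^ 2}
      with hBdef
    have hB : MeasurableSet B := by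
      apply measurableSet_eq_fun
      · exact Complex.measurable_im.comp (measurable_pi_apply _)
      · exact (continuous_finset_sum _ fun j _ =>
          (continuous_norm.comp (continuous_apply _)).pow 2).measurable
    have hrange : ∀ q : (Fin (m + 1) → ℂ) × ℝ, bMap (m + 1) q ∈ B := by
      intro q
      show ((bMap (m + 1) q) (Fin.last (m + 1))).im
        = ∑ k : Fin (m + 1), ‖(bMap (m + 1) q) k.castSucc‖ ^ 2
      simp only [bMap, Fin.snoc_last, Fin.snoc_castSucc]
      simp
      refine Finset.sum_congr rfl fun i _ => ?_
      rw [← Complex.ofReal_pow, Complex.ofReal_re]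
    have hBfull : betaM (m + 1) Bᶜ = 0 := by
      rw [betaM, Measure.map_apply hbMapMeas hB.compl]
      have : bMap (m + 1) ⁻¹' Bᶜ = ∅ := by
        ext q
        simp only [Set.mem_preimage, Set.mem_compl_iff, Set.mem_empty_iff_false,
          iff_false, not_not]
        exact hrange q
      rw [this]
      simp
    have hmemS : ∀ z ∈ B,
        (fun j : Fin (m + 1) => (z + t • iotaPt (m + 1)) j.succ) ∈ Siegel m := by
      intro z hz
      have hlast : (z + t • iotaPt (m + 1)) ((Fin.last m).succ)
          = z (Fin.last (m + 1)) + t * Complex.I := by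
        rw [Fin.succ_last]
        simp [iotaPt, Complex.real_smul]
      have hcast : ∀ j : Fin m, (z + t • iotaPt (m + 1)) ((j.castSucc).succ)
          = z ((j.succ).castSucc) := by
        intro j
        have hne : (Fin.castSucc (j.succ) : Fin (m + 2)) ≠ Fin.last (m + 1) :=
          (Fin.castSucc_lt_last _).ne
        rw [Fin.succ_castSucc]
        simp [iotaPt, hne]
      show (∑ j : Fin m, ‖(z + t • iotaPt (m + 1)) ((j.castSucc).succ)‖ ^ 2)
        < ((z + t • iotaPt (m + 1)) ((Fin.last m).succ)).im
      have h2 : ((z + t • iotaPt (m + 1)) ((Fin.last m).succ)).im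
          = (∑ k : Fin (m + 1), ‖z k.castSucc‖ ^ 2) + t := by
        rw [hlast]
        have hz' : (z (Fin.last (m + 1))).im
            = ∑ k : Fin (m + 1), ‖z k.castSucc‖ ^ 2 := hz
        simp [Complex.add_im, hz']
      rw [h2]
      calc ∑ j : Fin m, ‖(z + t • iotaPt (m + 1)) ((j.castSucc).succ)‖ ^ 2
          = ∑ j : Fin m, ‖z ((j.succ).castSucc)‖ ^ 2 :=
            Finset.sum_congr rfl fun j _ => by rw [hcast j]
        _ ≤ ∑ k : Fin (m + 1), ‖z k.castSucc‖ ^ 2 := by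
            rw [Fin.sum_univ_succ]
            exact le_add_of_nonneg_left (by positivity)
        _ < (∑ k : Fin (m + 1), ‖z k.castSucc‖ ^ 2) + t :=
            lt_add_of_pos_right _ ht
    have hptwise : ∀ z ∈ B,
        ENNReal.ofReal (‖G (z + t • iotaPt (m + 1))‖ ^ p)
          = F (fun j : Fin (m + 1) => (z + t • iotaPt (m + 1)) j.succ) := by
      intro z hz
      rw [hG, hFdef]
      simp only []
      rw [hgidef, Set.indicator_of_mem (hmemS z hz)]
    have hBae : ∀ᵐ z ∂(betaM (m + 1)), z ∈ B := by
      rw [ae_iff]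
      exact hBfull
    have hae : (fun z => ENNReal.ofReal (‖G (z + t • iotaPt (m + 1))‖ ^ p))
        =ᵐ[betaM (m + 1)]
          fun z => F (fun j : Fin (m + 1) => (z + t • iotaPt (m + 1)) j.succ) :=
      hBae.mono fun z hz => hptwise z hz
    have hfmeas : Measurable fun z : Fin (m + 2) → ℂ =>
        F (fun j : Fin (m + 1) => (z + t • iotaPt (m + 1)) j.succ) := by
      apply hFm.comp
      exact measurable_pi_lambda _ fun j =>
        (measurable_pi_apply j.succ).comp (measurable_id.add_const _)
    have hkey : ∀ q : (Fin (m + 1) → ℂ) × ℝ,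
        (fun j : Fin (m + 1) => (bMap (m + 1) q + t • iotaPt (m + 1)) j.succ)
          = Fin.snoc (Fin.tail q.1)
            ((q.2 : ℂ) + Complex.I * (((∑ k, ‖q.1 k‖ ^ 2) + t : ℝ) : ℂ)) := by
      intro q
      funext j
      induction j using Fin.lastCases with
      | last =>
        rw [Fin.snoc_last]
        show (bMap (m + 1) q) ((Fin.last m).succ) + t • iotaPt (m + 1) ((Fin.last m).succ) = _
        rw [Fin.succ_last]
        simp only [bMap, iotaPt, Fin.snoc_last, if_pos rfl, Complex.real_smul]
        push_cast
        ring
      | cast k =>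
        rw [Fin.snoc_castSucc]
        show (bMap (m + 1) q) ((k.castSucc).succ) + t • iotaPt (m + 1) ((k.castSucc).succ)
          = Fin.tail q.1 k
        rw [Fin.succ_castSucc]
        have hne : (Fin.castSucc (k.succ) : Fin (m + 2)) ≠ Fin.last (m + 1) :=
          (Fin.castSucc_lt_last _).ne
        simp only [bMap, iotaPt, Fin.snoc_castSucc, if_neg hne, smul_zero, add_zero]
        rfl
    have hsetm : MeasurableSet {w : Fin (m + 1) → ℂ | w ∈ Siegel m ∧ t < rhoSelf m w} :=
      (siegel_isOpen m).measurableSet.inter (measurableSet_lt measurable_const hrho)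
    have hsetrw : {w : Fin (m + 1) → ℂ |
          (∑ j : Fin m, ‖w j.castSucc‖ ^ 2) + t < (w (Fin.last m)).im}
        = {w | w ∈ Siegel m ∧ t < rhoSelf m w} := by
      ext w
      simp only [Set.mem_setOf_eq, Siegel, rhoSelf]
      constructor
      · intro h
        exact ⟨by linarith, by linarith⟩
      · rintro ⟨h1, h2⟩
        linarith
    calc (∫⁻ z, ENNReal.ofReal (‖G (z + t • iotaPt (m + 1))‖ ^ p) ∂betaM (m + 1))
        = ∫⁻ z, F (fun j : Fin (m + 1) => (z + t • iotaPt (m + 1)) j.succ) ∂betaM (m + 1) :=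
          lintegral_congr_ae hae
      _ = ∫⁻ q : (Fin (m + 1) → ℂ) × ℝ,
            F (fun j : Fin (m + 1) => (bMap (m + 1) q + t • iotaPt (m + 1)) j.succ) := by
          rw [betaM]
          exact lintegral_map hfmeas hbMapMeas
      _ = ∫⁻ q : (Fin (m + 1) → ℂ) × ℝ,
            F (Fin.snoc (Fin.tail q.1)
              ((q.2 : ℂ) + Complex.I * (((∑ k, ‖q.1 k‖ ^ 2) + t : ℝ) : ℂ))) :=
          lintegral_congr fun q => by rw [hkey q]
      _ = ENNReal.ofReal π *
            ∫⁻ w in {w : Fin (m + 1) → ℂ |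
              (∑ j : Fin m, ‖w j.castSucc‖ ^ 2) + t < (w (Fin.last m)).im}, F w :=
          core m t F hFm
      _ = ENNReal.ofReal π *
            ∫⁻ w in {w | w ∈ Siegel m ∧ t < rhoSelf m w},
              ENNReal.ofReal (‖g w‖ ^ p) := by
          rw [hsetrw]
          congr 1
          refine setLIntegral_congr_fun hsetm (fun w hw => ?_)
          rw [hFdef]
          simp only []
          rw [hgidef, Set.indicator_of_mem hw.1]
  refine ⟨hdiff, part2, ?_⟩
  refine iSup_le fun t => iSup_le fun ht => ?_
  rw [part2 t ht]
  refine mul_le_mul_right ?_ _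
  exact lintegral_mono_set fun w hw => hw.1
end
end
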